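/- arXiv:math/0507522 — 6 statements merged into one kernel-verified Lean document; each statement's English description precedes it below -/
import Mathlib

section
/- For any z ∈ ℝ² and ρ > 0 with ρ + |z| ≤ 1, ∫_{|y| ≤ ρ} |log|y+z|| dy ≤ ∫_{|y| ≤ ρ} |log|y|| dy; i.e. the integral of |log| over a disc of radius ρ is maximized when the disc is centered at the origin. -/
open MeasureTheory Real


lemma aux_logIntOn : IntegrableOn Real.log (Set.Ioc 0 1) volume := by
  have h1 : IntegrableOn (fun x : ℝ => x ^ (-(1/2) : ℝ)) (Set.Ioo 0 1) volume :=
    (intervalIntegral.integrableOn_Ioo_rpow_iff one_pos).2 (by norm_num)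
  rw [integrableOn_Ioc_iff_integrableOn_Ioo]
  refine Integrable.mono' (h1.const_mul 2) Real.measurable_log.aestronglyMeasurable ?_
  rw [ae_restrict_iff' measurableSet_Ioo]
  filter_upwards with x hx
  have hx0 : (0:ℝ) < x := hx.1
  have hlog : Real.log x ≤ 0 := Real.log_nonpos hx0.le hx.2.le
  have h2 := Real.log_le_sub_one_of_pos (Real.rpow_pos_of_pos hx0 (-(1/2)))
  rw [Real.log_rpow hx0] at h2
  have h3 : (0:ℝ) < x ^ (-(1/2) : ℝ) := Real.rpow_pos_of_pos hx0 _
  rw [Real.norm_eq_abs, abs_of_nonpos hlog]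
  nlinarith

lemma aux_logAbsIntOn : IntegrableOn (fun t : ℝ => Real.log |t|) (Set.Icc (-1) 1) volume := by
  have hpos : IntegrableOn (fun t : ℝ => Real.log |t|) (Set.Ioc 0 1) volume := by
    refine (integrableOn_congr_fun ?_ measurableSet_Ioc).2 aux_logIntOn
    intro x hx; simp only [abs_of_pos hx.1]
  have hneg : IntegrableOn (fun t : ℝ => Real.log |t|) (Set.Ico (-1) 0) volume := by
    have h := (MeasurePreserving.integrableOn_comp_preimage
      (Measure.measurePreserving_neg (volume : Measure ℝ)) measurableEmbedding_neg
      (f := fun t : ℝ => Real.log |t|) (s := Set.Ioc 0 1)).2 hpos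
    have hset : (Neg.neg ⁻¹' Set.Ioc (0:ℝ) 1) = Set.Ico (-1) 0 := by
      ext x
      simp only [Set.mem_preimage, Set.mem_Ioc, Set.mem_Ico]
      constructor <;> rintro ⟨a, b⟩ <;> constructor <;> linarith
    have hfun : ((fun t : ℝ => Real.log |t|) ∘ Neg.neg) = fun t : ℝ => Real.log |t| := by
      funext t; simp [abs_neg]
    rwa [hset, hfun] at h
  have h0 : IntegrableOn (fun t : ℝ => Real.log |t|) {0} volume := by
    rw [IntegrableOn, Measure.restrict_eq_zero.2 (by simp)]
    exact integrable_zero_measure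
  refine ((hneg.union hpos).union h0).mono_set ?_
  intro x hx
  rcases lt_trichotomy x 0 with h | h | h
  · exact Or.inl (Or.inl ⟨hx.1, h⟩)
  · exact Or.inr (by simp [h])
  · exact Or.inl (Or.inr ⟨h, hx.2⟩)

lemma aux_boundInt : IntegrableOn (fun p : ℝ × ℝ => Real.log |p.1| + Real.log |p.2|)
    (Set.Icc (-1:ℝ) 1 ×ˢ Set.Icc (-1:ℝ) 1) volume := by
  rw [IntegrableOn, Measure.volume_eq_prod, ← Measure.prod_restrict]
  haveI : IsFiniteMeasure ((volume : Measure ℝ).restrict (Set.Icc (-1:ℝ) 1)) :=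
    ⟨by rw [Measure.restrict_apply_univ]; exact measure_Icc_lt_top⟩
  set μ := (volume : Measure ℝ).restrict (Set.Icc (-1:ℝ) 1) with hμ
  have h1 : Integrable (fun z : ℝ × ℝ => Real.log |z.1| * 1) (μ.prod μ) :=
    Integrable.mul_prod aux_logAbsIntOn (integrable_const (1:ℝ))
  have h2 : Integrable (fun z : ℝ × ℝ => 1 * Real.log |z.2|) (μ.prod μ) :=
    Integrable.mul_prod (integrable_const (1:ℝ)) aux_logAbsIntOn
  exact (h1.add h2).congr (ae_of_all _ (fun p => by simp))

lemma aux_coord (y : EuclideanSpace ℝ (Fin 2)) (i : Fin 2) : |y i| ≤ ‖y‖ := by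
  rw [EuclideanSpace.norm_eq, ← Real.sqrt_sq_eq_abs]
  apply Real.sqrt_le_sqrt
  have : ‖y i‖ ^ 2 = y i ^ 2 := by rw [Real.norm_eq_abs, sq_abs]
  rw [← this]
  exact Finset.single_le_sum (f := fun j => ‖y j‖ ^ 2) (fun j _ => sq_nonneg _)
    (Finset.mem_univ i)

lemma aux_logNormIntOn :
    IntegrableOn (fun y : EuclideanSpace ℝ (Fin 2) => Real.log ‖y‖)
      (Metric.closedBall 0 1) volume := by
  set e : EuclideanSpace ℝ (Fin 2) ≃ᵐ ℝ × ℝ :=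
    (MeasurableEquiv.toLp 2 (Fin 2 → ℝ)).symm.trans (MeasurableEquiv.finTwoArrow) with he
  have mp : MeasurePreserving e volume volume :=
    (volume_preserving_finTwoArrow ℝ).comp (EuclideanSpace.volume_preserving_symm_measurableEquiv_toLp (Fin 2))
  have hB : IntegrableOn
      ((fun p : ℝ × ℝ => -(Real.log |p.1| + Real.log |p.2|)) ∘ e)
      (e ⁻¹' (Set.Icc (-1:ℝ) 1 ×ˢ Set.Icc (-1:ℝ) 1)) volume :=
    (mp.integrableOn_comp_preimage e.measurableEmbedding).2 aux_boundInt.neg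
  have hsub : Metric.closedBall (0 : EuclideanSpace ℝ (Fin 2)) 1 ⊆
      e ⁻¹' (Set.Icc (-1:ℝ) 1 ×ˢ Set.Icc (-1:ℝ) 1) := by
    intro y hy
    rw [Metric.mem_closedBall, dist_zero_right] at hy
    have h0 := (aux_coord y 0).trans hy
    have h1 := (aux_coord y 1).trans hy
    constructor
    · exact abs_le.1 h0
    · exact abs_le.1 h1
  refine Integrable.mono' (hB.mono_set hsub)
    ((Real.measurable_log.comp measurable_norm).aestronglyMeasurable) ?_
  rw [ae_restrict_iff' measurableSet_closedBall]
  filter_upwards with y hy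
  rw [Metric.mem_closedBall, dist_zero_right] at hy
  have hlog : Real.log ‖y‖ ≤ 0 := Real.log_nonpos (norm_nonneg _) hy
  rw [Real.norm_eq_abs, abs_of_nonpos hlog]
  show -Real.log ‖y‖ ≤ -(Real.log |y 0| + Real.log |y 1|)
  by_cases hy0 : y = 0
  · simp [hy0]
  · have hne : y 0 ≠ 0 ∨ y 1 ≠ 0 := by
      by_contra hc
      push_neg at hc
      apply hy0
      ext i
      fin_cases i
      · exact hc.1
      · exact hc.2
    have hb0 : Real.log |y 0| ≤ 0 :=
      Real.log_nonpos (abs_nonneg _) ((aux_coord y 0).trans hy)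
    have hb1 : Real.log |y 1| ≤ 0 :=
      Real.log_nonpos (abs_nonneg _) ((aux_coord y 1).trans hy)
    rcases hne with h | h
    · have : Real.log |y 0| ≤ Real.log ‖y‖ :=
        Real.log_le_log (abs_pos.2 h) (aux_coord y 0)
      linarith
    · have : Real.log |y 1| ≤ Real.log ‖y‖ :=
        Real.log_le_log (abs_pos.2 h) (aux_coord y 1)
      linarith

/-- For `z ∈ ℝ²` and `ρ > 0` with `ρ + ‖z‖ ≤ 1`, the integral of
`|log ‖y + z‖|` over the disc of radius `ρ` about the origin is at most the integral
of `|log ‖y‖|` over the same disc: the integral is maximized when the disc is centered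
at the origin. -/
theorem stmt8 (z : EuclideanSpace ℝ (Fin 2)) (ρ : ℝ) (hρ : 0 < ρ) (h : ρ + ‖z‖ ≤ 1) :
    (∫ y in Metric.closedBall (0 : EuclideanSpace ℝ (Fin 2)) ρ, |Real.log ‖y + z‖|)
      ≤ ∫ y in Metric.closedBall (0 : EuclideanSpace ℝ (Fin 2)) ρ, |Real.log ‖y‖| := by
  set T := Metric.closedBall (0 : EuclideanSpace ℝ (Fin 2)) ρ with hT
  set S := Metric.closedBall z ρ with hS
  have hρ1 : ρ ≤ 1 := by have := norm_nonneg z; linarith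
  have hT1 : T ⊆ Metric.closedBall (0 : EuclideanSpace ℝ (Fin 2)) 1 := Metric.closedBall_subset_closedBall hρ1
  have hS1 : S ⊆ Metric.closedBall (0 : EuclideanSpace ℝ (Fin 2)) 1 := by
    intro y hy
    rw [Metric.mem_closedBall] at hy ⊢
    calc dist y 0 ≤ dist y z + dist z 0 := dist_triangle _ _ _
      _ ≤ ρ + ‖z‖ := by rw [dist_zero_right]; exact add_le_add_left hy _
      _ ≤ 1 := h
  set g : EuclideanSpace ℝ (Fin 2) → ℝ := fun y => -Real.log ‖y‖ with hg
  have hgInt : IntegrableOn g (Metric.closedBall (0 : EuclideanSpace ℝ (Fin 2)) 1) volume := aux_logNormIntOn.neg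
  have hSint : IntegrableOn g S volume := hgInt.mono_set hS1
  have hTint : IntegrableOn g T volume := hgInt.mono_set hT1
  have hTm : MeasurableSet T := measurableSet_closedBall
  have hSm : MeasurableSet S := measurableSet_closedBall
  -- rewrite LHS
  have step1 : (∫ y in T, |Real.log ‖y + z‖|) = ∫ y in T, g (y + z) := by
    refine setIntegral_congr_fun hTm ?_
    intro y hy
    rw [Metric.mem_closedBall, dist_zero_right] at hy
    have h1 : ‖y + z‖ ≤ 1 := le_trans (norm_add_le _ _) (by linarith)
    simp only [hg]
    rw [abs_of_nonpos (Real.log_nonpos (norm_nonneg _) h1)]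
  have step2 : (∫ y in T, g (y + z)) = ∫ y in S, g y := by
    have mp : MeasurePreserving (fun y : EuclideanSpace ℝ (Fin 2) => y + z) volume volume :=
      measurePreserving_add_right volume z
    have hpre : (fun y : EuclideanSpace ℝ (Fin 2) => y + z) ⁻¹' S = T := by
      ext y
      simp only [Set.mem_preimage, hS, hT, Metric.mem_closedBall, dist_eq_norm,
        add_sub_cancel_right, sub_zero]
    have emb : MeasurableEmbedding (fun y : EuclideanSpace ℝ (Fin 2) => y + z) :=
      (MeasurableEquiv.addRight z).measurableEmbedding
    have h2 := mp.setIntegral_preimage_emb emb g S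
    rw [hpre] at h2
    exact h2
  have step3 : (∫ y in T, |Real.log ‖y‖|) = ∫ y in T, g y := by
    refine setIntegral_congr_fun hTm ?_
    intro y hy
    rw [Metric.mem_closedBall, dist_zero_right] at hy
    simp only [hg]
    rw [abs_of_nonpos (Real.log_nonpos (norm_nonneg _) (hy.trans hρ1))]
  rw [step1, step2, step3]
  -- measure facts
  have hvolST : volume S = volume T := Measure.addHaar_closedBall_center volume z ρ
  have hfinST : volume (S ∩ T) ≠ ⊤ :=
    ne_of_lt (lt_of_le_of_lt (measure_mono Set.inter_subset_right) measure_closedBall_lt_top)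
  have hdiff : volume (S \ T) = volume (T \ S) := by
    have h1 := measure_diff_add_inter (μ := volume) S hTm
    have h2 := measure_diff_add_inter (μ := volume) T hSm
    rw [Set.inter_comm T S] at h2
    have h3 : volume (S \ T) + volume (S ∩ T) = volume (T \ S) + volume (S ∩ T) := by
      rw [h1, h2, hvolST]
    rw [add_comm (volume (S \ T)), add_comm (volume (T \ S))] at h3
    exact (ENNReal.add_right_inj hfinST).1 h3
  rw [← integral_inter_add_diff hTm hSint, ← integral_inter_add_diff hSm hTint,
    Set.inter_comm T S]
  refine add_le_add_right ?_ _
  have hkey : (∫ y in S \ T, g y) ≤ ∫ y in T \ S, g y := by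
    have hc1 : (∫ y in S \ T, g y) ≤ ∫ _y in S \ T, (-Real.log ρ) := by
      refine setIntegral_mono_on (hSint.mono_set Set.diff_subset)
        (integrableOn_const (lt_of_le_of_lt
          (measure_mono Set.diff_subset) measure_closedBall_lt_top).ne) (hSm.diff hTm) ?_
      intro y hy
      have : ρ < ‖y‖ := by
        have := hy.2
        rw [hT, Metric.mem_closedBall, dist_zero_right] at this
        exact lt_of_not_ge this
      simp only [hg, neg_le_neg_iff]
      exact Real.log_le_log hρ this.le
    have hc2 : (∫ _y in T \ S, (-Real.log ρ)) ≤ ∫ y in T \ S, g y := by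
      refine setIntegral_mono_on_ae
        (integrableOn_const (lt_of_le_of_lt
          (measure_mono Set.diff_subset) measure_closedBall_lt_top).ne)
        (hTint.mono_set Set.diff_subset) (hTm.diff hSm) ?_
      have h0 : ∀ᵐ (y : EuclideanSpace ℝ (Fin 2)) ∂volume, y ∉ ({0} : Set (EuclideanSpace ℝ (Fin 2))) :=
        compl_mem_ae_iff.2 (measure_singleton 0)
      filter_upwards [h0] with y hy0 hy
      have hle : ‖y‖ ≤ ρ := by
        have := hy.1
        rw [hT, Metric.mem_closedBall, dist_zero_right] at this
        exact this
      have hpos : 0 < ‖y‖ := norm_pos_iff.2 (by simpa using hy0)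
      simp only [hg, neg_le_neg_iff]
      exact Real.log_le_log hpos hle
    calc (∫ y in S \ T, g y) ≤ ∫ _y in S \ T, (-Real.log ρ) := hc1
      _ = (volume (S \ T)).toReal • (-Real.log ρ) := setIntegral_const _
      _ = (volume (T \ S)).toReal • (-Real.log ρ) := by rw [hdiff]
      _ = ∫ _y in T \ S, (-Real.log ρ) := (setIntegral_const _).symm
      _ ≤ ∫ y in T \ S, g y := hc2
  exact hkey
end

section
/- Let u ∈ C²(ℝ²) solve Δu = 2πγ(u+a)V where γ > 0, a ∈ ℝ, and V ≥ 0 is continuous with compact support, and suppose u(x) = Z log|x| + O(|x|^{−1}) and ∇u(x) = Z x/|x|² + O(|x|^{−2}) as |x| → ∞. If Z = 0 then u ≡ 0, ∫|∇u|² = 0, and ∫(u+a)²V = 0. -/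
set_option maxHeartbeats 1000000

open MeasureTheory Real

noncomputable section

namespace Stmt12Aux

local notation "E2" => EuclideanSpace ℝ (Fin 2)

lemma abs_le_norm' (z : E2) (i : Fin 2) : |z i| ≤ ‖z‖ := by
  rw [EuclideanSpace.norm_eq, ← Real.sqrt_sq_eq_abs]
  apply Real.sqrt_le_sqrt
  refine Finset.single_le_sum (f := fun j => ‖z j‖^2) (fun j _ => by positivity)
    (Finset.mem_univ i) |>.trans_eq' ?_
  simp [Real.norm_eq_abs, sq_abs]

lemma fderiv_eq_inner (u : E2 → ℝ) (y v : E2) (hd : DifferentiableAt ℝ u y) :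
    fderiv ℝ u y v = inner ℝ (gradient u y) v := by
  have h := hd.hasGradientAt
  rw [hasGradientAt_iff_hasFDerivAt] at h
  rw [h.fderiv]
  simp [InnerProductSpace.toDual_apply_apply]

lemma norm_sq_eq (w : E2) : ‖w‖ ^ 2 = ∑ i, (w i) ^ 2 := by
  rw [EuclideanSpace.norm_eq, Real.sq_sqrt (by positivity)]
  simp [Real.norm_eq_abs, sq_abs]

def ψ : (Fin 2 → ℝ) →L[ℝ] EuclideanSpace ℝ (Fin 2) :=
  (EuclideanSpace.equiv (Fin 2) ℝ).symm.toContinuousLinearMap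

lemma ψ_measurePreserving : MeasurePreserving (fun x : Fin 2 → ℝ => ψ x) volume volume :=
  PiLp.volume_preserving_toLp (Fin 2)

/-- Divergence theorem on squares, transported to the Euclidean plane. -/
lemma divergence_sq (F : Fin 2 → E2 → ℝ)
    (F' : Fin 2 → E2 → E2 →L[ℝ] ℝ)
    (hF : ∀ i y, HasFDerivAt (F i) (F' i y) y)
    (hFc : ∀ i, Continuous (F i))
    (D : E2 → ℝ)
    (hD : ∀ y, D y = ∑ i, F' i y (EuclideanSpace.single i 1))
    (hDc : Continuous D)
    (r : ℝ) (hr : 0 ≤ r) :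
    (∫ x in Set.Icc (fun _ => -r) (fun _ : Fin 2 => r), D (ψ x)) =
      ∑ i : Fin 2,
        ((∫ x in Set.Icc ((fun _ => -r) ∘ i.succAbove) ((fun _ : Fin 2 => r) ∘ i.succAbove),
            F i (ψ (i.insertNth r x))) -
          ∫ x in Set.Icc ((fun _ => -r) ∘ i.succAbove) ((fun _ : Fin 2 => r) ∘ i.succAbove),
            F i (ψ (i.insertNth (-r) x))) := by
  have hle : (fun _ : Fin 2 => -r) ≤ fun _ => r := fun i => by simp; linarith
  have key := MeasureTheory.integral_divergence_of_hasFDerivAt_off_countable'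
    (fun _ : Fin 2 => -r) (fun _ => r) hle
    (fun i x => F i (ψ x)) (fun i x => (F' i (ψ x)).comp ψ) ∅ Set.countable_empty
    (fun i => ((hFc i).comp ψ.continuous).continuousOn)
    (fun x hx i => (hF i (ψ x)).comp x ψ.hasFDerivAt)
    ?_
  · have heq : (fun x => ∑ i, ((F' i (ψ x)).comp ψ) (Pi.single i 1)) = fun x => D (ψ x) := by
      ext x; rw [hD]; rfl
    calc (∫ x in Set.Icc (fun _ => -r) (fun _ : Fin 2 => r), D (ψ x))
        = ∫ x in Set.Icc (fun _ => -r) (fun _ : Fin 2 => r),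
            ∑ i, ((F' i (ψ x)).comp ψ) (Pi.single i 1) := by rw [heq]
      _ = _ := by rw [key]
  · have heq : (fun x => ∑ i, ((F' i (ψ x)).comp ψ) (Pi.single i 1)) = fun x => D (ψ x) := by
      ext x; rw [hD]; rfl
    rw [show (fun x => ∑ i, ((F' i (ψ x)).comp ψ) (Pi.single i 1)) = fun x => D (ψ x) from heq]
    exact (hDc.comp ψ.continuous).continuousOn.integrableOn_compact isCompact_Icc

/-- Bound for a boundary face integral. -/
lemma face_bound (G : E2 → ℝ) (K r t : ℝ) (hr : 0 < r) (ht : |t| = r)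
    (hGc : Continuous G)
    (hK : ∀ z : E2, r ≤ ‖z‖ → |G z| ≤ K) (i : Fin 2) :
    ‖∫ x in Set.Icc ((fun _ => -r) ∘ i.succAbove) ((fun _ : Fin 2 => r) ∘ i.succAbove),
        G (ψ (i.insertNth t x))‖ ≤ K * (2 * r) := by
  have hvol : (volume (Set.Icc ((fun _ => -r) ∘ i.succAbove)
      ((fun _ : Fin 2 => r) ∘ i.succAbove))).toReal = 2 * r := by
    rw [Real.volume_Icc_pi_toReal (fun j => by simp [Function.comp]; linarith)]
    simp [Function.comp]
    ring
  have hb := norm_setIntegral_le_of_norm_le_const (μ := volume)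
    (f := fun x : Fin 1 → ℝ => G (ψ (i.insertNth t x)))
    (s := Set.Icc ((fun _ => -r) ∘ i.succAbove) ((fun _ : Fin 2 => r) ∘ i.succAbove)) (C := K)
    (isCompact_Icc.measure_lt_top) ?_
  · exact hb.trans_eq (by rw [← hvol]; rfl)
  · intro x hx
    rw [Real.norm_eq_abs]
    apply hK
    have h1 : |(ψ (i.insertNth t x)) i| = r := by
      have h0 : (ψ (i.insertNth t x)) i = t := by
        have h1 : (i.insertNth t x : Fin 2 → ℝ) i = t := @Fin.insertNth_apply_same 1 (fun _ => ℝ) i t x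
        exact h1
      rw [h0, ht]
    calc r = |(ψ (i.insertNth t x)) i| := h1.symm
      _ ≤ ‖ψ (i.insertNth t x)‖ := abs_le_norm' _ i

end Stmt12Aux

open Stmt12Aux


/-- Let `u ∈ C²(ℝ²)` solve `Δu = 2πγ(u+a)V` with `γ > 0`, `a ∈ ℝ`,
`V ≥ 0` continuous with compact support, and suppose
`u(x) = Z log ‖x‖ + O(‖x‖⁻¹)` and `∇u(x) = Z x/‖x‖² + O(‖x‖⁻²)` at infinity,
where `Z = γ ∫ (u+a)V`. If `Z = 0` then `u ≡ 0`, `∫ ‖∇u‖² = 0` and `∫ (u+a)² V = 0`. -/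
theorem stmt12
    (u V : EuclideanSpace ℝ (Fin 2) → ℝ) (γ a Z : ℝ)
    (hu : ContDiff ℝ 2 u)
    (hγ : 0 < γ)
    (hVcont : Continuous V) (hVsupp : HasCompactSupport V)
    (hVnonneg : ∀ x, 0 ≤ V x)
    (hZ : Z = γ * ∫ x, (u x + a) * V x)
    (hlap : ∀ x, (∑ i : Fin 2,
        iteratedFDeriv ℝ 2 u x ![EuclideanSpace.single i 1, EuclideanSpace.single i 1])
      = 2 * Real.pi * γ * (u x + a) * V x)
    (hasymp : ∃ C R : ℝ, ∀ x, R ≤ ‖x‖ →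
      |u x - Z * Real.log ‖x‖| ≤ C / ‖x‖ ∧
      ‖gradient u x - (Z / ‖x‖ ^ 2) • x‖ ≤ C / ‖x‖ ^ 2)
    (hZ0 : Z = 0) :
    (∀ x, u x = 0) ∧
    (∫ x, ‖gradient u x‖ ^ 2) = 0 ∧
    (∫ x, (u x + a) ^ 2 * V x) = 0 := by
  subst hZ0
  obtain ⟨C, R, hCR⟩ := hasymp
  have hu_dec : ∀ x : EuclideanSpace ℝ (Fin 2), R ≤ ‖x‖ → |u x| ≤ C / ‖x‖ := by
    intro x hx; have := (hCR x hx).1; simpa using this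
  have hg_dec : ∀ x : EuclideanSpace ℝ (Fin 2), R ≤ ‖x‖ → ‖gradient u x‖ ≤ C / ‖x‖ ^ 2 := by
    intro x hx; have := (hCR x hx).2; simpa using this
  set R₁ : ℝ := max R 1 with hR₁def
  have hR₁1 : 1 ≤ R₁ := le_max_right _ _
  have hRR₁ : R ≤ R₁ := le_max_left _ _
  have hR₁0 : 0 < R₁ := by linarith
  -- C is nonnegative
  have hC : 0 ≤ C := by
    have hx0 : ‖(R₁ : ℝ) • EuclideanSpace.single (0 : Fin 2) (1:ℝ)‖ = R₁ := by
      rw [norm_smul, EuclideanSpace.norm_single]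
      simp [abs_of_pos hR₁0]
    have h := hu_dec _ (by rw [hx0]; exact hRR₁)
    rw [hx0] at h
    have h0 := (abs_nonneg _).trans h
    have := (le_div_iff₀ hR₁0).mp h0
    simpa using this
  -- differentiability facts
  have hud : Differentiable ℝ u := hu.differentiable (by norm_num)
  have h2 : ContDiff ℝ 1 (fderiv ℝ u) := hu.fderiv_right (by norm_num)
  have h2d : Differentiable ℝ (fderiv ℝ u) := h2.differentiable one_ne_zero
  have hfcont : Continuous (fderiv ℝ u) := h2.continuous
  have hucont : Continuous u := hu.continuous
  have hgradc : Continuous (gradient u) := by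
    have hg : gradient u = fun y => (InnerProductSpace.toDual ℝ _).symm (fderiv ℝ u y) := rfl
    rw [hg]
    exact (LinearIsometryEquiv.continuous _).comp hfcont
  -- coordinates of the gradient
  have hgcoord : ∀ (i : Fin 2) (y : EuclideanSpace ℝ (Fin 2)),
      gradient u y i = fderiv ℝ u y (EuclideanSpace.single i 1) := by
    intro i y
    rw [fderiv_eq_inner u y _ (hud y), real_inner_comm, EuclideanSpace.inner_single_left]
    simp
  have hnormgrad : ∀ y : EuclideanSpace ℝ (Fin 2),
      ‖gradient u y‖ ^ 2 = ∑ i : Fin 2, (fderiv ℝ u y (EuclideanSpace.single i 1)) ^ 2 := by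
    intro y
    rw [norm_sq_eq]
    exact Finset.sum_congr rfl fun i _ => by rw [hgcoord]
  have habs_g : ∀ (i : Fin 2) (y : EuclideanSpace ℝ (Fin 2)),
      |fderiv ℝ u y (EuclideanSpace.single i 1)| ≤ ‖gradient u y‖ := by
    intro i y
    rw [← hgcoord]
    exact abs_le_norm' _ i
  -- the vector field and its derivative
  set F : Fin 2 → EuclideanSpace ℝ (Fin 2) → ℝ :=
    fun i y => (u y + a) * fderiv ℝ u y (EuclideanSpace.single i 1) with hFdef
  set F' : Fin 2 → EuclideanSpace ℝ (Fin 2) → EuclideanSpace ℝ (Fin 2) →L[ℝ] ℝ :=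
    fun i y => (u y + a) • ((fderiv ℝ (fderiv ℝ u) y).flip (EuclideanSpace.single i 1))
      + (fderiv ℝ u y (EuclideanSpace.single i 1)) • fderiv ℝ u y with hF'def
  have hgd : ∀ (i : Fin 2) (y : EuclideanSpace ℝ (Fin 2)),
      HasFDerivAt (fun z => fderiv ℝ u z (EuclideanSpace.single i 1))
        ((fderiv ℝ (fderiv ℝ u) y).flip (EuclideanSpace.single i 1)) y := by
    intro i y
    have hd : HasFDerivAt (fderiv ℝ u) (fderiv ℝ (fderiv ℝ u) y) y := (h2d y).hasFDerivAt
    simpa using hd.clm_apply (hasFDerivAt_const (EuclideanSpace.single i (1:ℝ)) y)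
  have hF : ∀ (i : Fin 2) (y : EuclideanSpace ℝ (Fin 2)), HasFDerivAt (F i) (F' i y) y := by
    intro i y
    have hua : HasFDerivAt (fun z => u z + a) (fderiv ℝ u y) y :=
      ((hud y).hasFDerivAt).add_const a
    exact hua.mul (hgd i y)
  have hgicont : ∀ i : Fin 2, Continuous fun y => fderiv ℝ u y (EuclideanSpace.single i 1) := by
    intro i
    have : (fun y => fderiv ℝ u y (EuclideanSpace.single i 1))
        = fun y => (gradient u y) i := by
      ext y; rw [hgcoord]
    rw [this]
    exact (continuous_apply i).comp ((PiLp.continuous_ofLp 2 _).comp hgradc)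
  have hFc : ∀ i : Fin 2, Continuous (F i) :=
    fun i => ((hucont.add continuous_const).mul (hgicont i))
  -- the divergence
  set D : EuclideanSpace ℝ (Fin 2) → ℝ :=
    fun y => ‖gradient u y‖ ^ 2 + 2 * Real.pi * γ * ((u y + a) ^ 2 * V y) with hDdef
  have hD : ∀ y, D y = ∑ i : Fin 2, F' i y (EuclideanSpace.single i 1) := by
    intro y
    have hsum : ∑ i : Fin 2,
        ((fderiv ℝ (fderiv ℝ u) y).flip (EuclideanSpace.single i 1)) (EuclideanSpace.single i 1)
        = 2 * Real.pi * γ * (u y + a) * V y := by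
      rw [← hlap y]
      refine Finset.sum_congr rfl fun i _ => ?_
      rw [iteratedFDeriv_two_apply]
      simp [ContinuousLinearMap.flip_apply]
    have : ∑ i : Fin 2, F' i y (EuclideanSpace.single i 1)
        = (u y + a) * (∑ i : Fin 2,
            ((fderiv ℝ (fderiv ℝ u) y).flip (EuclideanSpace.single i 1))
              (EuclideanSpace.single i 1))
          + ∑ i : Fin 2, (fderiv ℝ u y (EuclideanSpace.single i 1)) ^ 2 := by
      rw [Finset.mul_sum, ← Finset.sum_add_distrib]
      refine Finset.sum_congr rfl fun i _ => ?_
      simp [hF'def, ContinuousLinearMap.add_apply, ContinuousLinearMap.smul_apply]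
      ring
    rw [this, hsum]
    simp only [hDdef]
    rw [hnormgrad y]
    ring
  have hDc : Continuous D := by
    refine ((hgradc.norm.pow 2).add ?_)
    exact continuous_const.mul (((hucont.add continuous_const).pow 2).mul hVcont)
  -- global bound on u
  obtain ⟨M0, hM0⟩ := (isCompact_closedBall (0 : EuclideanSpace ℝ (Fin 2)) R₁).exists_bound_of_continuousOn
    hucont.continuousOn
  set Mu : ℝ := max M0 C with hMudef
  have hMu : ∀ y, |u y| ≤ Mu := by
    intro y
    rcases le_or_gt ‖y‖ R₁ with hy | hy
    · have := hM0 y (by simpa [Metric.mem_closedBall, dist_zero_right] using hy)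
      exact le_trans (by simpa using this) (le_max_left _ _)
    · have h1 : R ≤ ‖y‖ := le_trans hRR₁ hy.le
      have := hu_dec y h1
      have h2' : C / ‖y‖ ≤ C := by
        apply div_le_self hC
        linarith
      exact le_trans this (le_trans h2' (le_max_right _ _))
  have hMu0 : 0 ≤ Mu := le_trans (abs_nonneg _) (hMu 0)
  set K : ℝ := (Mu + |a|) * C with hKdef
  have hK0 : 0 ≤ K := mul_nonneg (by positivity) hC
  -- pointwise bound for F on the exterior
  have hFbound : ∀ (i : Fin 2) (r : ℝ), R₁ ≤ r → ∀ z : EuclideanSpace ℝ (Fin 2),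
      r ≤ ‖z‖ → |F i z| ≤ K / r ^ 2 := by
    intro i r hr z hz
    have hrpos : 0 < r := lt_of_lt_of_le hR₁0 hr
    have hznorm : 0 < ‖z‖ := lt_of_lt_of_le hrpos hz
    have hRz : R ≤ ‖z‖ := le_trans (le_trans hRR₁ hr) hz
    have h1 : |F i z| ≤ (Mu + |a|) * ‖gradient u z‖ := by
      rw [hFdef]
      simp only [abs_mul]
      apply mul_le_mul (by
        calc |u z + a| ≤ |u z| + |a| := abs_add_le _ _
          _ ≤ Mu + |a| := by linarith [hMu z]) (habs_g i z) (abs_nonneg _) (by positivity)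
    have h2' : ‖gradient u z‖ ≤ C / r ^ 2 := by
      refine le_trans (hg_dec z hRz) ?_
      apply div_le_div_of_nonneg_left hC ?_ ?_ <;> nlinarith
    calc |F i z| ≤ (Mu + |a|) * (C / r ^ 2) :=
          le_trans h1 (mul_le_mul_of_nonneg_left h2' (by positivity))
      _ = K / r ^ 2 := by rw [hKdef]; ring
  -- integrability
  have hI2 : Integrable (fun y => (u y + a) ^ 2 * V y) := by
    apply Continuous.integrable_of_hasCompactSupport
    · exact ((hucont.add continuous_const).pow 2).mul hVcont
    · exact hVsupp.mul_left
  obtain ⟨Mg, hMg⟩ := (isCompact_closedBall (0 : EuclideanSpace ℝ (Fin 2)) R₁).exists_bound_of_continuousOn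
    hgradc.continuousOn
  have hMg0 : 0 ≤ Mg := le_trans (norm_nonneg _) (hMg 0 (by simp [Metric.mem_closedBall]; positivity))
  set K' : ℝ := max (Mg ^ 2 * (1 + R₁) ^ 4) (C ^ 2 * 2 ^ 4) with hK'def
  have hIgrad : Integrable (fun y : EuclideanSpace ℝ (Fin 2) => ‖gradient u y‖ ^ 2) := by
    have hint : Integrable (fun y : EuclideanSpace ℝ (Fin 2) => K' * (1 + ‖y‖) ^ (-(4:ℝ))) := by
      apply Integrable.const_mul
      apply integrable_one_add_norm
      rw [finrank_euclideanSpace_fin]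
      norm_num
    refine hint.mono' ((hgradc.norm.pow 2).aestronglyMeasurable) ?_
    filter_upwards with y
    have hy1 : (0:ℝ) < 1 + ‖y‖ := by positivity
    have hrw : K' * (1 + ‖y‖) ^ (-(4:ℝ)) = K' / (1 + ‖y‖) ^ (4:ℕ) := by
      rw [Real.rpow_neg hy1.le, ← Real.rpow_natCast (1 + ‖y‖) 4]
      norm_num
      ring
    rw [Real.norm_eq_abs, abs_of_nonneg (by positivity), hrw]
    rcases le_or_gt ‖y‖ R₁ with hy | hy
    · have hb := hMg y (by simpa [Metric.mem_closedBall, dist_zero_right] using hy)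
      have h1 : ‖gradient u y‖ ^ 2 ≤ Mg ^ 2 := by nlinarith [norm_nonneg (gradient u y)]
      have h2' : (1 + ‖y‖) ^ (4:ℕ) ≤ (1 + R₁) ^ 4 := by
        apply pow_le_pow_left₀ (by positivity)
        linarith
      rw [le_div_iff₀ (by positivity)]
      have hK'1 : Mg ^ 2 * (1 + R₁) ^ 4 ≤ K' := le_max_left _ _
      calc ‖gradient u y‖ ^ 2 * (1 + ‖y‖) ^ (4:ℕ)
          ≤ Mg ^ 2 * (1 + R₁) ^ 4 := by nlinarith [norm_nonneg (gradient u y), pow_nonneg (le_of_lt (by positivity : (0:ℝ) < 1 + ‖y‖)) 4]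
        _ ≤ K' := hK'1
      -- need form: ≤ K' / (1+‖y‖)^4 * ... recheck
    · have hRy : R ≤ ‖y‖ := le_trans hRR₁ hy.le
      have hb := hg_dec y hRy
      have hy0 : (0:ℝ) < ‖y‖ := lt_trans hR₁0 hy
      have hy1' : (1:ℝ) ≤ ‖y‖ := le_trans hR₁1 hy.le
      have h1 : ‖gradient u y‖ ^ 2 ≤ C ^ 2 / ‖y‖ ^ 4 := by
        have := sq_nonneg (‖gradient u y‖)
        have hb2 : ‖gradient u y‖ ^ 2 ≤ (C / ‖y‖ ^ 2) ^ 2 := by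
          nlinarith [norm_nonneg (gradient u y)]
        calc ‖gradient u y‖ ^ 2 ≤ (C / ‖y‖ ^ 2) ^ 2 := hb2
          _ = C ^ 2 / ‖y‖ ^ 4 := by rw [div_pow]; ring_nf
      have h2' : (1 + ‖y‖) ^ (4:ℕ) ≤ 2 ^ 4 * ‖y‖ ^ 4 := by
        have : (1 + ‖y‖) ≤ 2 * ‖y‖ := by linarith
        calc (1 + ‖y‖) ^ (4:ℕ) ≤ (2 * ‖y‖) ^ 4 := by
              apply pow_le_pow_left₀ (by positivity) this
          _ = 2 ^ 4 * ‖y‖ ^ 4 := by ring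
      have hK'2 : C ^ 2 * 2 ^ 4 ≤ K' := le_max_right _ _
      rw [le_div_iff₀ (by positivity)]
      calc ‖gradient u y‖ ^ 2 * (1 + ‖y‖) ^ (4:ℕ)
          ≤ (C ^ 2 / ‖y‖ ^ 4) * (2 ^ 4 * ‖y‖ ^ 4) := by
            apply mul_le_mul h1 h2' (by positivity) (by positivity)
        _ = C ^ 2 * 2 ^ 4 := by field_simp
        _ ≤ K' := hK'2
  have hDint : Integrable D := by
    rw [hDdef]
    exact hIgrad.add (hI2.const_mul _)
  -- transfer to the pi side
  have hemb : MeasurableEmbedding (fun x : Fin 2 → ℝ => ψ x) :=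
    (MeasurableEquiv.toLp 2 (Fin 2 → ℝ)).measurableEmbedding
  have hDpi_int : Integrable (fun x : Fin 2 → ℝ => D (ψ x)) :=
    (ψ_measurePreserving.integrable_comp_emb hemb).mpr hDint
  have hDpi_eq : (∫ x : Fin 2 → ℝ, D (ψ x)) = ∫ y, D y :=
    ψ_measurePreserving.integral_comp hemb D
  -- the increasing boxes
  set B : ℕ → Set (Fin 2 → ℝ) :=
    fun n => Set.Icc (fun _ => -(R₁ + (n:ℝ))) (fun _ : Fin 2 => R₁ + (n:ℝ)) with hBdef
  have hBmeas : ∀ n, MeasurableSet (B n) := fun n => measurableSet_Icc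
  have hBmono : Monotone B := by
    intro m n hmn
    have : (m:ℝ) ≤ n := Nat.cast_le.mpr hmn
    apply Set.Icc_subset_Icc <;> intro i <;> simp <;> linarith
  have hBunion : (⋃ n, B n) = Set.univ := by
    ext x
    simp only [Set.mem_iUnion, Set.mem_univ, iff_true, hBdef, Set.mem_Icc]
    obtain ⟨n, hn⟩ := exists_nat_ge ‖x‖
    refine ⟨n, ?_, ?_⟩ <;> intro i <;>
      have h1 := norm_le_pi_norm x i <;> rw [Real.norm_eq_abs] at h1 <;>
      rw [abs_le] at h1 <;> [skip; skip] <;> simp <;> linarith [h1.1, h1.2]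
  have hL : Filter.Tendsto (fun n => ∫ x in B n, D (ψ x)) Filter.atTop (nhds (∫ y, D y)) := by
    have := MeasureTheory.tendsto_setIntegral_of_monotone hBmeas hBmono
      (by rw [hBunion]; exact (integrableOn_univ).mpr hDpi_int)
    rw [hBunion] at this
    simpa [MeasureTheory.setIntegral_univ, hDpi_eq] using this
  -- divergence theorem on each box
  have hEq : ∀ n : ℕ, (∫ x in B n, D (ψ x))
      = ∑ i : Fin 2,
        ((∫ x in Set.Icc ((fun _ => -(R₁ + (n:ℝ))) ∘ i.succAbove)
              ((fun _ : Fin 2 => R₁ + (n:ℝ)) ∘ i.succAbove),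
            F i (ψ (i.insertNth (R₁ + (n:ℝ)) x))) -
          ∫ x in Set.Icc ((fun _ => -(R₁ + (n:ℝ))) ∘ i.succAbove)
              ((fun _ : Fin 2 => R₁ + (n:ℝ)) ∘ i.succAbove),
            F i (ψ (i.insertNth (-(R₁ + (n:ℝ))) x))) := by
    intro n
    exact divergence_sq F F' hF hFc D hD hDc (R₁ + n) (by positivity)
  -- boundary estimate
  have hS0 : Filter.Tendsto (fun n : ℕ => ∑ i : Fin 2,
        ((∫ x in Set.Icc ((fun _ => -(R₁ + (n:ℝ))) ∘ i.succAbove)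
              ((fun _ : Fin 2 => R₁ + (n:ℝ)) ∘ i.succAbove),
            F i (ψ (i.insertNth (R₁ + (n:ℝ)) x))) -
          ∫ x in Set.Icc ((fun _ => -(R₁ + (n:ℝ))) ∘ i.succAbove)
              ((fun _ : Fin 2 => R₁ + (n:ℝ)) ∘ i.succAbove),
            F i (ψ (i.insertNth (-(R₁ + (n:ℝ))) x)))) Filter.atTop (nhds 0) := by
    apply squeeze_zero_norm (a := fun n : ℕ => 8 * K / (R₁ + n))
    · intro n
      set r : ℝ := R₁ + n with hrdef
      have hrR : R₁ ≤ r := by rw [hrdef]; simp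
      have hrpos : 0 < r := lt_of_lt_of_le hR₁0 hrR
      have hface : ∀ (i : Fin 2) (t : ℝ), |t| = r →
          ‖∫ x in Set.Icc ((fun _ => -r) ∘ i.succAbove) ((fun _ : Fin 2 => r) ∘ i.succAbove),
            F i (ψ (i.insertNth t x))‖ ≤ (K / r ^ 2) * (2 * r) := by
        intro i t ht
        exact face_bound (F i) (K / r ^ 2) r t hrpos ht (hFc i)
          (fun z hz => hFbound i r hrR z hz) i
      calc ‖∑ i : Fin 2, ((∫ x in Set.Icc ((fun _ => -r) ∘ i.succAbove)
              ((fun _ : Fin 2 => r) ∘ i.succAbove), F i (ψ (i.insertNth r x))) -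
            ∫ x in Set.Icc ((fun _ => -r) ∘ i.succAbove)
              ((fun _ : Fin 2 => r) ∘ i.succAbove), F i (ψ (i.insertNth (-r) x)))‖
          ≤ ∑ i : Fin 2, ((K / r ^ 2) * (2 * r) + (K / r ^ 2) * (2 * r)) := by
            refine le_trans (norm_sum_le _ _) (Finset.sum_le_sum fun i _ => ?_)
            refine le_trans (norm_sub_le _ _) ?_
            exact add_le_add (hface i r (abs_of_pos hrpos)) (hface i (-r) (by rw [abs_neg]; exact abs_of_pos hrpos))
        _ = 8 * K / r := by
            rw [Finset.sum_const]
            simp only [Finset.card_univ, Fintype.card_fin, nsmul_eq_mul]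
            field_simp
            ring
    · have h1 : Filter.Tendsto (fun n : ℕ => R₁ + (n:ℝ)) Filter.atTop Filter.atTop :=
        Filter.tendsto_atTop_add_const_left _ R₁ tendsto_natCast_atTop_atTop
      exact Filter.Tendsto.div_atTop tendsto_const_nhds h1
  -- the total integral vanishes
  have htot : (∫ y, D y) = 0 := by
    refine tendsto_nhds_unique (Filter.Tendsto.congr (fun n => hEq n) hL) hS0
  -- split the integral
  have hI1nn : 0 ≤ ∫ y, ‖gradient u y‖ ^ 2 := integral_nonneg fun y => by positivity
  have hI2nn : 0 ≤ ∫ y, (u y + a) ^ 2 * V y :=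
    integral_nonneg fun y => mul_nonneg (sq_nonneg _) (hVnonneg y)
  have hsplit : (∫ y, D y)
      = (∫ y, ‖gradient u y‖ ^ 2) + 2 * Real.pi * γ * ∫ y, (u y + a) ^ 2 * V y := by
    rw [hDdef]
    rw [integral_add hIgrad (hI2.const_mul _), integral_const_mul]
  have hπγ : 0 < 2 * Real.pi * γ := by positivity
  have hI1 : (∫ y, ‖gradient u y‖ ^ 2) = 0 := by nlinarith [hsplit, htot, hI2nn, hI1nn, mul_nonneg hπγ.le hI2nn]
  have hI2' : (∫ y, (u y + a) ^ 2 * V y) = 0 := by nlinarith [hsplit, htot, hI2nn, hI1nn]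
  -- gradient vanishes identically
  have hgrad0 : ∀ y, gradient u y = 0 := by
    have hnn : ∀ y : EuclideanSpace ℝ (Fin 2), (0:ℝ) ≤ ‖gradient u y‖ ^ 2 := fun y => by positivity
    have hae := (integral_eq_zero_iff_of_nonneg hnn hIgrad).mp hI1
    have heq := (Continuous.ae_eq_iff_eq volume (hgradc.norm.pow 2) continuous_const).mp hae
    intro y
    have hsq : ‖gradient u y‖ ^ 2 = 0 := congrFun heq y
    have hn : ‖gradient u y‖ = 0 := pow_eq_zero_iff two_ne_zero |>.mp hsq
    exact norm_eq_zero.mp hn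
  have hfderiv0 : ∀ y, fderiv ℝ u y = 0 := by
    intro y
    ext v
    rw [fderiv_eq_inner u y v (hud y), hgrad0 y]
    simp
  have huconst : ∀ x y : EuclideanSpace ℝ (Fin 2), u x = u y :=
    is_const_of_fderiv_eq_zero hud hfderiv0
  have hu0 : u 0 = 0 := by
    have hxn : ∀ n : ℕ, |u 0| ≤ C / (R₁ + n) := by
      intro n
      have hxnorm : ‖((R₁ + (n:ℝ)) : ℝ) • EuclideanSpace.single (0 : Fin 2) (1:ℝ)‖ = R₁ + n := by
        rw [norm_smul, EuclideanSpace.norm_single]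
        simp [abs_of_pos (by positivity : (0:ℝ) < R₁ + n)]
      have h := hu_dec (((R₁ + (n:ℝ)) : ℝ) • EuclideanSpace.single (0 : Fin 2) (1:ℝ))
        (by rw [hxnorm]; have : (0:ℝ) ≤ n := Nat.cast_nonneg n; linarith)
      rw [hxnorm] at h
      rw [huconst 0 (((R₁ + (n:ℝ)) : ℝ) • EuclideanSpace.single (0 : Fin 2) (1:ℝ))]
      exact h
    have hlim : Filter.Tendsto (fun n : ℕ => C / (R₁ + n)) Filter.atTop (nhds 0) :=
      Filter.Tendsto.div_atTop tendsto_const_nhds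
        (Filter.tendsto_atTop_add_const_left _ R₁ tendsto_natCast_atTop_atTop)
    have := ge_of_tendsto' hlim hxn
    have h0 := abs_nonneg (u 0)
    have : |u 0| = 0 := le_antisymm this h0
    exact abs_eq_zero.mp this
  exact ⟨fun x => by rw [huconst x 0, hu0], hI1, hI2'⟩
end
end

section
/- Let u ∈ C²(ℝ²) satisfy Δu = 2πγ(u+a)V with γ > 0, V ≥ 0 continuous of compact support, and u(x) = Z log|x| + O(|x|^{−1}) at infinity with Z > 0. Then u + a ≥ 0 everywhere on ℝ². -/
open MeasureTheory Real

/-- 1D second derivative test at a local minimum. -/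
lemma sd_test {g g' : ℝ → ℝ} {g'' : ℝ}
    (hmin : IsLocalMin g 0)
    (hg : ∀ t, HasDerivAt g (g' t) t)
    (hg' : HasDerivAt g' g'' 0) : 0 ≤ g'' := by
  by_contra hneg
  push_neg at hneg
  have h0 : g' 0 = 0 := hmin.hasDerivAt_eq_zero (hg 0)
  have hs : Filter.Tendsto (fun t => g' t / t) (nhdsWithin 0 {(0:ℝ)}ᶜ) (nhds g'') := by
    have := hasDerivAt_iff_tendsto_slope.1 hg'
    have heq : slope g' 0 = fun t => g' t / t := by
      funext t; simp [slope_def_field, h0]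
    rwa [heq] at this
  have hev : ∀ᶠ t in nhdsWithin (0:ℝ) {(0:ℝ)}ᶜ, g' t / t < 0 :=
    hs.eventually (Iio_mem_nhds hneg)
  have hev' : ∀ᶠ t in nhdsWithin (0:ℝ) (Set.Ioi 0), g' t < 0 := by
    have h1 : ∀ᶠ t in nhdsWithin (0:ℝ) (Set.Ioi 0), g' t / t < 0 :=
      hev.filter_mono (nhdsWithin_mono 0 (fun x hx => ne_of_gt hx))
    have h2 : ∀ᶠ t in nhdsWithin (0:ℝ) (Set.Ioi 0), (0:ℝ) < t :=
      eventually_mem_nhdsWithin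
    filter_upwards [h1, h2] with t ht ht'
    rcases div_neg_iff.mp ht with h | h
    · exact absurd ht' (not_lt.mpr h.2.le)
    · exact h.1
  obtain ⟨δ, hδmem, hδ⟩ := mem_nhdsGT_iff_exists_Ioo_subset.mp hev'
  obtain ⟨r, hr, hloc⟩ := Metric.eventually_nhds_iff.mp hmin
  set τ := min δ r / 2 with hτ
  have hδpos : 0 < δ := Set.mem_Ioi.mp hδmem
  have hτpos : 0 < τ := by have := lt_min hδpos hr; simp only [hτ]; linarith
  have hτδ : τ < δ := by have := min_le_left δ r; simp only [hτ]; linarith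
  have hanti : StrictAntiOn g (Set.Icc 0 τ) := by
    apply strictAntiOn_of_deriv_neg (convex_Icc 0 τ)
    · exact fun x _ => (hg x).continuousAt.continuousWithinAt
    · intro x hx
      rw [interior_Icc] at hx
      rw [(hg x).deriv]
      exact hδ ⟨hx.1, lt_of_lt_of_le hx.2 hτδ.le⟩
  have h1 : g τ < g 0 := hanti (Set.left_mem_Icc.mpr hτpos.le) (Set.right_mem_Icc.mpr hτpos.le) hτpos
  have h2 : g 0 ≤ g τ := by
    apply hloc
    rw [Real.dist_eq, sub_zero, abs_of_pos hτpos]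
    have := min_le_right δ r; linarith
  linarith

/-- Directional derivatives of a `C²` function along a line. -/
lemma dir2 {E : Type*} [NormedAddCommGroup E] [NormedSpace ℝ E]
    {u : E → ℝ} (hu : ContDiff ℝ 2 u) (p e : E) :
    (∀ t : ℝ, HasDerivAt (fun s => u (p + s • e)) (fderiv ℝ u (p + t • e) e) t) ∧
    HasDerivAt (fun t : ℝ => fderiv ℝ u (p + t • e) e) (iteratedFDeriv ℝ 2 u p ![e, e]) 0 := by
  have hL : ∀ t : ℝ, HasDerivAt (fun s : ℝ => p + s • e) e t := by
    intro t
    simpa using ((hasDerivAt_id t).smul_const e).const_add p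
  refine ⟨fun t => ?_, ?_⟩
  · exact ((hu.differentiable (by norm_num) (p + t • e)).hasFDerivAt).comp_hasDerivAt t (hL t)
  · have h1 : ContDiff ℝ 1 (fderiv ℝ u) := hu.fderiv_right (by norm_num)
    have hF : HasFDerivAt (fderiv ℝ u) (fderiv ℝ (fderiv ℝ u) p) p :=
      (h1.differentiable (by norm_num) p).hasFDerivAt
    have hc : HasDerivAt (fun t : ℝ => fderiv ℝ u (p + t • e))
        (fderiv ℝ (fderiv ℝ u) p e) 0 := by
      have := hF.comp_hasDerivAt_of_eq 0 (hL 0) (by simp)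
      exact this
    have h2 := hc.clm_apply (hasDerivAt_const (0:ℝ) e)
    rw [iteratedFDeriv_two_apply]
    simpa using h2

lemma coord_le_norm (x : EuclideanSpace ℝ (Fin 2)) (i : Fin 2) : |x i| ≤ ‖x‖ := by
  rw [EuclideanSpace.norm_eq]
  have h : |x i| ^ 2 ≤ ∑ j, ‖x j‖ ^ 2 := by
    have := Finset.single_le_sum (f := fun j => ‖x j‖ ^ 2) (fun j _ => sq_nonneg _)
      (Finset.mem_univ i)
    simpa [Real.norm_eq_abs] using this
  calc |x i| = Real.sqrt (|x i| ^ 2) := (Real.sqrt_sq (abs_nonneg _)).symm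
    _ ≤ _ := Real.sqrt_le_sqrt h

/-- Let `u ∈ C²(ℝ²)` satisfy `Δu = 2πγ(u+a)V` with `γ > 0`,
`V ≥ 0` continuous of compact support, and `u(x) = Z log ‖x‖ + O(‖x‖⁻¹)` at infinity
with `Z = γ ∫ (u+a)V > 0`. Then `u + a ≥ 0` everywhere on `ℝ²`. -/
theorem stmt13
    (u V : EuclideanSpace ℝ (Fin 2) → ℝ) (γ a Z : ℝ)
    (hu : ContDiff ℝ 2 u)
    (hγ : 0 < γ)
    (hVcont : Continuous V) (hVsupp : HasCompactSupport V)
    (hVnonneg : ∀ x, 0 ≤ V x)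
    (hZ : Z = γ * ∫ x, (u x + a) * V x)
    (hlap : ∀ x, (∑ i : Fin 2,
        iteratedFDeriv ℝ 2 u x ![EuclideanSpace.single i 1, EuclideanSpace.single i 1])
      = 2 * Real.pi * γ * (u x + a) * V x)
    (hasymp : ∃ C R : ℝ, ∀ x, R ≤ ‖x‖ →
      |u x - Z * Real.log ‖x‖| ≤ C / ‖x‖)
    (hZpos : 0 < Z) :
    ∀ x, 0 ≤ u x + a := by
  obtain ⟨C, R, hCR⟩ := hasymp
  by_contra hcon
  push_neg at hcon
  obtain ⟨x₀, hx₀⟩ := hcon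
  have hwcont : Continuous fun x => u x + a := hu.continuous.add continuous_const
  set C' : ℝ := max C 0 with hC'
  set R₁ : ℝ := max (max R 1) (Real.exp ((C' + |a| + 1) / Z)) with hR₁def
  have hR₁1 : (1:ℝ) ≤ R₁ := le_trans (le_max_right R 1) (le_max_left _ _)
  have hout : ∀ x : EuclideanSpace ℝ (Fin 2), R₁ ≤ ‖x‖ → 1 ≤ u x + a := by
    intro x hx
    have hb := hCR x (le_trans (le_trans (le_max_left R 1) (le_max_left _ _)) hx)
    have hx1 : (1:ℝ) ≤ ‖x‖ := le_trans hR₁1 hx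
    have hx0 : (0:ℝ) < ‖x‖ := lt_of_lt_of_le one_pos hx1
    have hC'0 : (0:ℝ) ≤ C' := le_max_right C 0
    have h1 : C / ‖x‖ ≤ C' :=
      le_trans ((div_le_div_iff_of_pos_right hx0).mpr (le_max_left C 0)) (div_le_self hC'0 hx1)
    have hlog : (C' + |a| + 1) / Z ≤ Real.log ‖x‖ := by
      have hexp : Real.exp ((C' + |a| + 1) / Z) ≤ ‖x‖ := le_trans (le_max_right _ _) hx
      calc (C' + |a| + 1) / Z = Real.log (Real.exp ((C' + |a| + 1) / Z)) :=
            (Real.log_exp _).symm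
        _ ≤ Real.log ‖x‖ := Real.log_le_log (Real.exp_pos _) hexp
    have h2 : C' + |a| + 1 ≤ Z * Real.log ‖x‖ := by
      have h := mul_le_mul_of_nonneg_left hlog hZpos.le
      rwa [mul_div_cancel₀ _ (ne_of_gt hZpos)] at h
    have h3 := abs_le.mp hb
    have h4 : -|a| ≤ a := neg_abs_le a
    linarith [h3.1, h3.2]
  have hKsub : ∀ y : EuclideanSpace ℝ (Fin 2), u y + a < 0 → ‖y‖ ≤ R₁ := by
    intro y hy
    by_contra h
    push_neg at h
    linarith [hout y h.le]
  set K : Set (EuclideanSpace ℝ (Fin 2)) :=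
    Metric.closedBall 0 R₁ ∩ {x | u x + a ≤ 0} with hKdef
  have hKcomp : IsCompact K :=
    (isCompact_closedBall _ _).inter_right (isClosed_le hwcont continuous_const)
  have hx₀K : x₀ ∈ K :=
    ⟨by rw [Metric.mem_closedBall, dist_zero_right]; exact hKsub x₀ hx₀, hx₀.le⟩
  have key : ∀ ε : ℝ, 0 < ε → -(ε * R₁ ^ 2) ≤ u x₀ + a := by
    intro ε hε
    set v : EuclideanSpace ℝ (Fin 2) → ℝ := fun x => u x + a - ε * (x 0) ^ 2 with hvdef
    have hvcont : Continuous v :=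
      hwcont.sub (continuous_const.mul ((PiLp.continuous_apply 2 _ (0 : Fin 2)).pow 2))
    obtain ⟨p, hpK, hpmin⟩ := hKcomp.exists_isMinOn ⟨x₀, hx₀K⟩ hvcont.continuousOn
    rcases lt_or_eq_of_le (show u p + a ≤ 0 from hpK.2) with hneg | hzero
    · -- interior negative minimum : contradiction with the equation
      exfalso
      have hlmin : IsLocalMin v p := by
        have hopen : IsOpen {x : EuclideanSpace ℝ (Fin 2) | u x + a < 0} :=
          isOpen_lt hwcont continuous_const
        filter_upwards [hopen.mem_nhds hneg] with y hy
        exact hpmin ⟨by rw [Metric.mem_closedBall, dist_zero_right]; exact hKsub y hy,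
          le_of_lt hy⟩
      have hdir : ∀ i : Fin 2,
          0 ≤ iteratedFDeriv ℝ 2 u p ![EuclideanSpace.single i 1, EuclideanSpace.single i 1]
            - ε * (((EuclideanSpace.single i (1:ℝ) : EuclideanSpace ℝ (Fin 2)) 0) *
                ((EuclideanSpace.single i (1:ℝ) : EuclideanSpace ℝ (Fin 2)) 0)
              + ((EuclideanSpace.single i (1:ℝ) : EuclideanSpace ℝ (Fin 2)) 0) *
                ((EuclideanSpace.single i (1:ℝ) : EuclideanSpace ℝ (Fin 2)) 0)) := by
        intro i
        set e : EuclideanSpace ℝ (Fin 2) := EuclideanSpace.single i (1:ℝ) with hedef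
        set c : ℝ := e 0 with hcdef
        have hcoord : ∀ t : ℝ, (p + t • e) 0 = p 0 + t * c := by
          intro t
          simp [hcdef, PiLp.add_apply, PiLp.smul_apply, smul_eq_mul]
        set g : ℝ → ℝ := fun t => u (p + t • e) + a - ε * ((p 0 + t * c) * (p 0 + t * c))
          with hgdef
        have hlocg : IsLocalMin g 0 := by
          have hLc : Continuous fun t : ℝ => p + t • e :=
            continuous_const.add (continuous_id.smul continuous_const)
          have h0 : (fun t : ℝ => p + t • e) 0 = p := by simp
          have hm : IsLocalMin v ((fun t : ℝ => p + t • e) 0) := by rw [h0]; exact hlmin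
          have := IsLocalMin.comp_continuous (g := fun t : ℝ => p + t • e) (b := (0:ℝ))
            hm hLc.continuousAt
          have hfun : (v ∘ fun t : ℝ => p + t • e) = g := by
            funext t
            simp only [Function.comp, hvdef, hgdef, hcoord t, pow_two]
          rwa [hfun] at this
        have hb : ∀ t : ℝ, HasDerivAt (fun s : ℝ => p 0 + s * c) c t := by
          intro t
          simpa using ((hasDerivAt_id t).mul_const c).const_add (p 0)
        have hg : ∀ t : ℝ, HasDerivAt g
            (fderiv ℝ u (p + t • e) e - ε * (c * (p 0 + t * c) + (p 0 + t * c) * c)) t := by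
          intro t
          exact ((((dir2 hu p e).1 t).add_const a).sub (((hb t).mul (hb t)).const_mul ε))
        have hg' : HasDerivAt
            (fun t : ℝ => fderiv ℝ u (p + t • e) e - ε * (c * (p 0 + t * c) + (p 0 + t * c) * c))
            (iteratedFDeriv ℝ 2 u p ![e, e] - ε * (c * c + c * c)) 0 := by
          have h1 := (dir2 hu p e).2
          have h2 : HasDerivAt (fun t : ℝ => c * (p 0 + t * c) + (p 0 + t * c) * c)
              (c * c + c * c) 0 := ((hb 0).const_mul c).add ((hb 0).mul_const c)
          exact h1.sub (h2.const_mul ε)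
        exact sd_test hlocg hg hg'
      have h0 := hdir 0
      have h1 := hdir 1
      have hlp := hlap p
      rw [Fin.sum_univ_two] at hlp
      have hc0 : (EuclideanSpace.single (0 : Fin 2) (1:ℝ) : EuclideanSpace ℝ (Fin 2)) 0 = 1 := by
        simp [EuclideanSpace.single_apply]
      have hc1 : (EuclideanSpace.single (1 : Fin 2) (1:ℝ) : EuclideanSpace ℝ (Fin 2)) 0 = 0 := by
        simp [EuclideanSpace.single_apply]
      rw [hc0] at h0
      rw [hc1] at h1
      have hA : 0 ≤ 2 * Real.pi * γ * V p :=
        mul_nonneg (by positivity) (hVnonneg p)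
      nlinarith [hneg, hA, hε]
    · -- minimum on the boundary of the negativity set
      have h5 : v p ≤ v x₀ := hpmin hx₀K
      have h6 : v x₀ ≤ u x₀ + a := by
        simp only [hvdef]
        nlinarith [sq_nonneg (x₀ 0), hε]
      have h7 : (p 0) ^ 2 ≤ R₁ ^ 2 := by
        have hp1 : ‖p‖ ≤ R₁ := by
          have := hpK.1
          rwa [Metric.mem_closedBall, dist_zero_right] at this
        have := coord_le_norm p 0
        have habs : |p 0| ≤ R₁ := le_trans this hp1
        exact sq_le_sq' (neg_le_of_abs_le habs) (le_of_abs_le habs)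
      have h8 : v p = -(ε * (p 0) ^ 2) := by
        simp only [hvdef]
        rw [hzero]
        ring
      nlinarith [h5, h6, h7, h8, hε]
  have hε₀ : (0:ℝ) < -(u x₀ + a) / (2 * R₁ ^ 2) := by
    apply div_pos (by linarith) (by nlinarith [hR₁1])
  have hkey := key _ hε₀
  have hR₁0 : R₁ ≠ 0 := by linarith
  have hcalc : -(-(u x₀ + a) / (2 * R₁ ^ 2) * R₁ ^ 2) = (u x₀ + a) / 2 := by
    field_simp
  rw [hcalc] at hkey
  linarith
end

section
/- Fix R₀ > 0. Let u^ε solve u^ε(εx) = (τ/2π) ∫ log(ε|x−y|) (u^ε(εy)|log ε|^{−1} + 1) V(y) dy with V ≥ 0 supported in B_{R₀}(0), ∫V = 1, τ > 0, and suppose u^ε ≥ −|log ε| and Λ_ε := (τ/2π)∫(u^ε(εy)|log ε|^{−1}+1)V(y)dy stays bounded. Then for every k > 0, sup_{|x| ≤ k} | u^ε(εx)|log ε|^{−1} + Λ_ε | → 0 as ε → 0. -/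
open MeasureTheory Real Filter Set


local notation "E2" => EuclideanSpace ℝ (Fin 2)

lemma aux_vol_cball {r : ℝ} (hr : 0 ≤ r) :
    volume (Metric.closedBall (0 : E2) r) = ENNReal.ofReal (π * r ^ 2) := by
  rw [EuclideanSpace.volume_closedBall, Fintype.card_fin]
  norm_num [Real.Gamma_two, Real.sq_sqrt Real.pi_nonneg]
  rw [← ENNReal.ofReal_pow hr, ← ENNReal.ofReal_mul (by positivity)]
  ring_nf

lemma aux_invnorm_integrableOn {S : ℝ} (hS : 0 < S) :
    IntegrableOn (fun y : E2 => ‖y‖⁻¹) (Metric.closedBall 0 S) := by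
  refine ⟨(measurable_norm.inv).aestronglyMeasurable, ?_⟩
  rw [hasFiniteIntegral_iff_ofReal
    (Eventually.of_forall (fun y => inv_nonneg.2 (norm_nonneg y)))]
  set A : ℕ → Set E2 := fun n =>
    Metric.closedBall 0 (S * 2⁻¹ ^ n) \ Metric.closedBall 0 (S * 2⁻¹ ^ (n + 1)) with hA
  have hcover : Metric.closedBall (0 : E2) S ⊆ {0} ∪ ⋃ n, A n := by
    intro y hy
    rcases eq_or_ne y 0 with rfl | hy0
    · exact Or.inl rfl
    have hpos : 0 < ‖y‖ := norm_pos_iff.2 hy0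
    have hyS : ‖y‖ ≤ S := mem_closedBall_zero_iff.1 hy
    have hex : ∃ n, S * 2⁻¹ ^ (n + 1) < ‖y‖ := by
      obtain ⟨n, hn⟩ := exists_pow_lt_of_lt_one (div_pos hpos hS)
        (by norm_num : (2⁻¹ : ℝ) < 1)
      refine ⟨n, ?_⟩
      have h1 : (2⁻¹ : ℝ) ^ (n + 1) ≤ 2⁻¹ ^ n :=
        pow_le_pow_of_le_one (by norm_num) (by norm_num) (Nat.le_succ n)
      have h2 : S * (2⁻¹ : ℝ) ^ n < ‖y‖ := by
        have := (lt_div_iff₀ hS).1 hn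
        linarith [this]
      nlinarith
    refine Or.inr (mem_iUnion.2 ⟨Nat.find hex, ?_, ?_⟩)
    · rw [mem_closedBall_zero_iff]
      rcases Nat.eq_zero_or_pos (Nat.find hex) with h0 | hposn
      · rw [h0]; simpa using hyS
      · obtain ⟨m, hm⟩ := Nat.exists_eq_succ_of_ne_zero hposn.ne'
        have hmin := Nat.find_min hex (m := m) (by omega)
        rw [hm]
        exact le_of_not_gt hmin
    · intro hmem
      exact absurd (mem_closedBall_zero_iff.1 hmem) (not_le.2 (Nat.find_spec hex))
  have hterm : ∀ n, (∫⁻ y in A n, ENNReal.ofReal ‖y‖⁻¹) ≤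
      ENNReal.ofReal (2 * π * S) * ENNReal.ofReal 2⁻¹ ^ n := by
    intro n
    have hr1 : (0:ℝ) < S * 2⁻¹ ^ (n + 1) := by positivity
    have hr0 : (0:ℝ) ≤ S * 2⁻¹ ^ n := by positivity
    have hmeasA : MeasurableSet (A n) :=
      measurableSet_closedBall.diff measurableSet_closedBall
    calc (∫⁻ y in A n, ENNReal.ofReal ‖y‖⁻¹)
        ≤ ∫⁻ _ in A n, ENNReal.ofReal ((S * 2⁻¹ ^ (n + 1))⁻¹) := by
          refine setLIntegral_mono' hmeasA (fun y hy => ?_)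
          refine ENNReal.ofReal_le_ofReal ?_
          have h2 : S * 2⁻¹ ^ (n + 1) < ‖y‖ :=
            not_le.1 (fun hle => hy.2 (mem_closedBall_zero_iff.2 hle))
          exact inv_anti₀ hr1 h2.le
      _ = ENNReal.ofReal ((S * 2⁻¹ ^ (n + 1))⁻¹) * volume (A n) := setLIntegral_const _ _
      _ ≤ ENNReal.ofReal ((S * 2⁻¹ ^ (n + 1))⁻¹) *
            volume (Metric.closedBall (0 : E2) (S * 2⁻¹ ^ n)) := by
          gcongr
          exact diff_subset
      _ = ENNReal.ofReal ((S * 2⁻¹ ^ (n + 1))⁻¹) * ENNReal.ofReal (π * (S * 2⁻¹ ^ n) ^ 2) := by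
          rw [aux_vol_cball hr0]
      _ = ENNReal.ofReal (2 * π * S) * ENNReal.ofReal 2⁻¹ ^ n := by
          rw [← ENNReal.ofReal_pow (by norm_num : (0:ℝ) ≤ 2⁻¹),
            ← ENNReal.ofReal_mul (by positivity),
            ← ENNReal.ofReal_mul (by positivity)]
          congr 1
          have h2n : ((2:ℝ)⁻¹) ^ n ≠ 0 := by positivity
          rw [pow_succ]
          field_simp
  calc (∫⁻ y in Metric.closedBall (0 : E2) S, ENNReal.ofReal ‖y‖⁻¹)
      ≤ ∫⁻ y in ({0} ∪ ⋃ n, A n : Set E2), ENNReal.ofReal ‖y‖⁻¹ :=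
        lintegral_mono_set hcover
    _ ≤ (∫⁻ y in ({0} : Set E2), ENNReal.ofReal ‖y‖⁻¹) +
          ∫⁻ y in (⋃ n, A n : Set E2), ENNReal.ofReal ‖y‖⁻¹ := lintegral_union_le _ _ _
    _ ≤ 0 + ∑' n, ∫⁻ y in A n, ENNReal.ofReal ‖y‖⁻¹ := by
        gcongr
        · exact le_of_eq (setLIntegral_measure_zero _ _ (measure_singleton 0))
        · exact lintegral_iUnion_le _ _
    _ ≤ 0 + ∑' n, ENNReal.ofReal (2 * π * S) * ENNReal.ofReal 2⁻¹ ^ n := by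
        gcongr with n
        exact hterm n
    _ < ⊤ := by
        rw [zero_add, ENNReal.tsum_mul_left, ENNReal.tsum_geometric]
        have h12 : ENNReal.ofReal 2⁻¹ = 2⁻¹ := by
          rw [ENNReal.ofReal_inv_of_pos (by norm_num : (0:ℝ) < 2)]
          norm_num
        rw [h12, ENNReal.one_sub_inv_two, inv_inv]
        exact ENNReal.mul_lt_top ENNReal.ofReal_lt_top (by norm_num)

set_option maxHeartbeats 2000000 in
/-- Fix `R₀ > 0`, `τ > 0`, and `V ≥ 0` continuous supported in
`B_{R₀}(0)` with `∫ V = 1`. Suppose for each `ε ∈ (0,1)` the function `u ε`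
satisfies the rescaled logarithmic integral equation
`u ε (εx) = (τ/2π) ∫ log (ε ‖x − y‖) (u ε (εy) |log ε|⁻¹ + 1) V y dy`,
that `u ε ≥ −|log ε|`, and that
`Λ ε = (τ/2π) ∫ (u ε (εy) |log ε|⁻¹ + 1) V y dy` stays bounded. Then for every
`k > 0`, `sup_{‖x‖ ≤ k} |u ε (εx) |log ε|⁻¹ + Λ ε| → 0` as `ε → 0⁺`. -/
theorem stmt14
    (R₀ τ : ℝ) (hR₀ : 0 < R₀) (hτ : 0 < τ)
    (V : EuclideanSpace ℝ (Fin 2) → ℝ)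
    (hVcont : Continuous V) (hVnonneg : ∀ x, 0 ≤ V x)
    (hVsupp : ∀ x, R₀ < ‖x‖ → V x = 0)
    (hVint : ∫ x, V x = 1)
    (u : ℝ → EuclideanSpace ℝ (Fin 2) → ℝ)
    (Λ : ℝ → ℝ)
    (hΛ : ∀ ε ∈ Set.Ioo (0 : ℝ) 1,
      Λ ε = (τ / (2 * Real.pi)) * ∫ y, (u ε (ε • y) * |Real.log ε|⁻¹ + 1) * V y)
    (heq : ∀ ε ∈ Set.Ioo (0 : ℝ) 1, ∀ x,
      u ε (ε • x) = (τ / (2 * Real.pi)) *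
        ∫ y, Real.log (ε * ‖x - y‖) * (u ε (ε • y) * |Real.log ε|⁻¹ + 1) * V y)
    (hlower : ∀ ε ∈ Set.Ioo (0 : ℝ) 1, ∀ x, -|Real.log ε| ≤ u ε x)
    (hbdd : ∃ M : ℝ, ∀ ε ∈ Set.Ioo (0 : ℝ) 1, |Λ ε| ≤ M) :
    ∀ k : ℝ, 0 < k → ∀ δ : ℝ, 0 < δ →
      ∀ᶠ ε in nhdsWithin (0 : ℝ) (Set.Ioo (0 : ℝ) 1),
        ∀ x : EuclideanSpace ℝ (Fin 2), ‖x‖ ≤ k →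
          |u ε (ε • x) * |Real.log ε|⁻¹ + Λ ε| < δ := by
  classical
  obtain ⟨M, hM⟩ := hbdd
  intro k hk δ hδ
  set c : ℝ := τ / (2 * Real.pi) with hc
  have hcpos : 0 < c := div_pos hτ (by positivity)
  -- bound on V
  have hVsupport : HasCompactSupport V := by
    apply HasCompactSupport.intro (isCompact_closedBall (0 : EuclideanSpace ℝ (Fin 2)) R₀)
    intro x hx
    exact hVsupp x (by simpa [not_le] using hx)
  obtain ⟨BV, hBV⟩ := hVsupport.exists_bound_of_continuous hVcont
  have hBV' : ∀ y, V y ≤ BV := fun y => (le_abs_self _).trans (by simpa using hBV y)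
  have hBVpos : 0 ≤ BV := le_trans (hVnonneg 0) (hBV' 0)
  have hM0 : 0 ≤ M := le_trans (abs_nonneg _) (hM (1/2) (by norm_num))
  -- constants
  set S : ℝ := k + R₀ with hSdef
  have hSpos : 0 < S := by positivity
  set κ : ℝ := ∫ z in Metric.closedBall (0 : EuclideanSpace ℝ (Fin 2)) S, ‖z‖⁻¹ with hκdef
  have hκ0 : 0 ≤ κ := setIntegral_nonneg measurableSet_closedBall
    (fun z _ => inv_nonneg.2 (norm_nonneg z))
  set volR : ℝ := (volume (Metric.closedBall (0 : EuclideanSpace ℝ (Fin 2)) R₀)).toReal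
    with hvolRdef
  have hvolR0 : 0 ≤ volR := ENNReal.toReal_nonneg
  set A : ℝ := max 0 (Real.log (2 * R₀)) with hAdef
  have hA0 : 0 ≤ A := le_max_left _ _
  set C : ℝ := A * M + 1 with hCdef
  have hC1 : 1 ≤ C := by nlinarith
  have hC0 : 0 ≤ C := by linarith
  set Econst : ℝ := C * BV * (κ + S * volR) with hEdef
  have hE0 : 0 ≤ Econst := by positivity
  -- threshold
  set ε₀ : ℝ := min (Real.exp (-(c * Econst + 1) / δ))
      (min (Real.exp (-1)) ((Real.exp 1 * S)⁻¹)) with hε₀def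
  have hε₀pos : 0 < ε₀ := by positivity
  rw [eventually_nhdsWithin_iff]
  filter_upwards [Ioo_mem_nhds (neg_lt_zero.2 hε₀pos) hε₀pos] with ε hεI hε01
  obtain ⟨hεpos, hε1⟩ := hε01
  have hεlt : ε < ε₀ := hεI.2
  have hεe : ε < Real.exp (-1) := lt_of_lt_of_le hεlt
    (le_trans (min_le_right _ _) (min_le_left _ _))
  have hεS : ε * S < Real.exp (-1) := by
    have h1 : ε < (Real.exp 1 * S)⁻¹ := lt_of_lt_of_le hεlt
      (le_trans (min_le_right _ _) (min_le_right _ _))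
    have h2 : ε * S < (Real.exp 1 * S)⁻¹ * S := by
      exact mul_lt_mul_of_pos_right h1 hSpos
    have h3 : (Real.exp 1 * S)⁻¹ * S = (Real.exp 1)⁻¹ := by
      field_simp
    rw [Real.exp_neg]
    rw [h3] at h2
    exact h2
  have hεδ : ε < Real.exp (-(c * Econst + 1) / δ) := lt_of_lt_of_le hεlt (min_le_left _ _)
  -- log quantities
  have hlogneg : Real.log ε < 0 := Real.log_neg hεpos hε1
  set L : ℝ := |Real.log ε| with hLdef
  have hLpos : 0 < L := abs_pos.2 hlogneg.ne
  have hLval : Real.log ε = -L := by rw [hLdef, abs_of_neg hlogneg, neg_neg]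
  have hL1 : 1 ≤ L := by
    have := Real.log_lt_log hεpos hεe
    rw [Real.log_exp] at this
    rw [hLdef, abs_of_neg hlogneg]
    linarith
  have hLbig : (c * Econst + 1) / δ < L := by
    have := Real.log_lt_log hεpos hεδ
    rw [Real.log_exp] at this
    rw [hLdef, abs_of_neg hlogneg]
    have hd : -((c * Econst + 1) / δ) = -(c * Econst + 1) / δ := by ring
    linarith [this, hd ▸ this]
  -- the function f
  set f : EuclideanSpace ℝ (Fin 2) → ℝ :=
    fun y => (u ε (ε • y) * L⁻¹ + 1) * V y with hfdef
  have hΛ2 : Λ ε = c * ∫ y, f y := by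
    rw [hΛ ε ⟨hεpos, hε1⟩]
  have heq2 : ∀ z, u ε (ε • z) = c * ∫ y, Real.log (ε * ‖z - y‖) * f y := by
    intro z
    rw [heq ε ⟨hεpos, hε1⟩ z]
    congr 1
    apply integral_congr_ae
    apply Eventually.of_forall
    intro y
    simp only [hfdef]
    ring
  have hf0 : ∀ y, 0 ≤ f y := by
    intro y
    apply mul_nonneg _ (hVnonneg y)
    have h1 : -L ≤ u ε (ε • y) := hlower ε ⟨hεpos, hε1⟩ (ε • y)
    have h2 : -L * L⁻¹ ≤ u ε (ε • y) * L⁻¹ :=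
      mul_le_mul_of_nonneg_right h1 (inv_nonneg.2 hLpos.le)
    have h3 : -L * L⁻¹ = -1 := by field_simp
    linarith [h3 ▸ h2]
  have hfsupp : ∀ y, R₀ < ‖y‖ → f y = 0 := by
    intro y hy
    simp [hfdef, hVsupp y hy]
  intro x hx
  -- log estimate for points in the support region
  have hlog_le : ∀ y : EuclideanSpace ℝ (Fin 2), ‖y‖ ≤ R₀ → y ≠ x →
      Real.log (ε * ‖x - y‖) ≤ -1 := by
    intro y hy hyx
    have hxy : 0 < ‖x - y‖ := norm_sub_pos_iff.2 (fun h => hyx h.symm)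
    have hle : ε * ‖x - y‖ ≤ ε * S := by
      have : ‖x - y‖ ≤ ‖x‖ + ‖y‖ := norm_sub_le x y
      nlinarith
    have h2 : Real.log (ε * ‖x - y‖) ≤ Real.log (Real.exp (-1)) :=
      Real.log_le_log (by positivity) (le_trans hle hεS.le)
    rwa [Real.log_exp] at h2
  by_cases hfint : Integrable f volume
  · -- main case
    have hintf0 : 0 ≤ ∫ y, f y := integral_nonneg hf0
    have hintfM : ∫ y, f y ≤ M / c := by
      have h1 : Λ ε ≤ M := (abs_le.1 (hM ε ⟨hεpos, hε1⟩)).2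
      rw [hΛ2] at h1
      rw [le_div_iff₀ hcpos]
      linarith [h1]
    -- pointwise upper bound for the rescaled solution on the support ball
    have hwbound : ∀ z : EuclideanSpace ℝ (Fin 2), ‖z‖ ≤ R₀ →
        u ε (ε • z) * L⁻¹ ≤ A * M * L⁻¹ := by
      intro z hz
      by_cases hg : Integrable (fun y => Real.log (ε * ‖z - y‖) * f y) volume
      · have hle : ∀ y, Real.log (ε * ‖z - y‖) * f y ≤ A * f y := by
          intro y
          rcases (hf0 y).eq_or_lt with h0 | hpos
          · rw [← h0]; simp
          · have hy : ‖y‖ ≤ R₀ := by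
              by_contra h
              exact absurd (hfsupp y (not_le.1 h)).symm hpos.ne
            have hlogA : Real.log (ε * ‖z - y‖) ≤ A := by
              rcases eq_or_lt_of_le (norm_nonneg (z - y)) with hzy | hzy
              · rw [← hzy, mul_zero, Real.log_zero]; exact hA0
              · have h1 : ε * ‖z - y‖ ≤ 2 * R₀ := by
                  have h2 : ‖z - y‖ ≤ ‖z‖ + ‖y‖ := norm_sub_le z y
                  nlinarith
                have := Real.log_le_log (by positivity) h1
                exact le_trans this (le_max_right _ _)
            exact mul_le_mul_of_nonneg_right hlogA (hf0 y)
        have hmono := integral_mono hg (hfint.const_mul A) hle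
        rw [integral_const_mul] at hmono
        have hIle : ∫ y, Real.log (ε * ‖z - y‖) * f y ≤ A * (M / c) := by
          calc ∫ y, Real.log (ε * ‖z - y‖) * f y ≤ A * ∫ y, f y := hmono
            _ ≤ A * (M / c) := mul_le_mul_of_nonneg_left hintfM hA0
        rw [heq2 z]
        have hfin : c * (A * (M / c)) = A * M := by field_simp
        calc c * (∫ y, Real.log (ε * ‖z - y‖) * f y) * L⁻¹
            ≤ c * (A * (M / c)) * L⁻¹ := by
              apply mul_le_mul_of_nonneg_right _ (inv_nonneg.2 hLpos.le)
              exact mul_le_mul_of_nonneg_left hIle hcpos.le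
          _ = A * M * L⁻¹ := by rw [hfin]
      · rw [heq2 z, integral_undef hg, mul_zero, zero_mul]
        positivity
    -- f is bounded by C * V
    have hfC : ∀ y, f y ≤ C * V y := by
      intro y
      by_cases hy : ‖y‖ ≤ R₀
      · have h1 : u ε (ε • y) * L⁻¹ + 1 ≤ C := by
          have h2 := hwbound y hy
          have h3 : A * M * L⁻¹ ≤ A * M := by
            have : L⁻¹ ≤ 1 := inv_le_one_of_one_le₀ hL1
            nlinarith
          rw [hCdef]; linarith
        exact mul_le_mul_of_nonneg_right h1 (hVnonneg y)
      · rw [hfsupp y (not_le.1 hy), hVsupp y (not_le.1 hy), mul_zero]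
    -- integrability of the Newtonian-type kernel
    have hsub : Metric.closedBall (0 : EuclideanSpace ℝ (Fin 2)) R₀ ⊆
        Metric.closedBall x S := by
      intro y hy
      rw [Metric.mem_closedBall] at hy ⊢
      rw [dist_zero_right] at hy
      calc dist y x ≤ ‖y‖ + ‖x‖ := by
            rw [dist_eq_norm]; exact norm_sub_le y x
        _ ≤ S := by rw [hSdef]; linarith
    have hIOS : IntegrableOn (fun y => ‖x - y‖⁻¹) (Metric.closedBall x S) volume := by
      have h1 : Integrable ((Metric.closedBall (0 : EuclideanSpace ℝ (Fin 2)) S).indicator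
          (fun z => ‖z‖⁻¹)) volume :=
        (integrable_indicator_iff measurableSet_closedBall).2 (aux_invnorm_integrableOn hSpos)
      have h2 : Integrable (fun y : EuclideanSpace ℝ (Fin 2) =>
          (Metric.closedBall (0 : EuclideanSpace ℝ (Fin 2)) S).indicator
            (fun z => ‖z‖⁻¹) (x - y)) volume :=
        (integrable_comp_sub_left _ x).2 h1
      refine (h2.integrableOn).congr_fun ?_ measurableSet_closedBall
      intro y hy
      have hmem : x - y ∈ Metric.closedBall (0 : EuclideanSpace ℝ (Fin 2)) S := by
        rw [mem_closedBall_zero_iff]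
        rw [Metric.mem_closedBall, dist_comm, dist_eq_norm] at hy
        exact hy
      simp only [indicator_of_mem hmem]
    have hIO : IntegrableOn (fun y => ‖x - y‖⁻¹)
        (Metric.closedBall (0 : EuclideanSpace ℝ (Fin 2)) R₀) volume := hIOS.mono_set hsub
    have htrans : ∫ y in Metric.closedBall x S, ‖x - y‖⁻¹ = κ := by
      have h1 : ∀ y : EuclideanSpace ℝ (Fin 2),
          (Metric.closedBall x S).indicator (fun y => ‖x - y‖⁻¹) y =
          (Metric.closedBall (0 : EuclideanSpace ℝ (Fin 2)) S).indicator
            (fun z => ‖z‖⁻¹) (x - y) := by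
        intro y
        by_cases hy : y ∈ Metric.closedBall x S
        · rw [indicator_of_mem hy, indicator_of_mem]
          rw [mem_closedBall_zero_iff]
          rw [Metric.mem_closedBall, dist_comm, dist_eq_norm] at hy
          exact hy
        · rw [indicator_of_notMem hy, indicator_of_notMem]
          intro hmem
          apply hy
          rw [mem_closedBall_zero_iff] at hmem
          rw [Metric.mem_closedBall, dist_comm, dist_eq_norm]
          exact hmem
      rw [← integral_indicator measurableSet_closedBall]
      rw [hκdef, ← integral_indicator measurableSet_closedBall]
      calc ∫ y, (Metric.closedBall x S).indicator (fun y => ‖x - y‖⁻¹) y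
          = ∫ y, (Metric.closedBall (0 : EuclideanSpace ℝ (Fin 2)) S).indicator
              (fun z => ‖z‖⁻¹) (x - y) := by
            exact integral_congr_ae (Eventually.of_forall h1)
        _ = ∫ z, (Metric.closedBall (0 : EuclideanSpace ℝ (Fin 2)) S).indicator
              (fun z => ‖z‖⁻¹) z := integral_sub_left_eq_self _ _ x
    have hκx : ∫ y in Metric.closedBall (0 : EuclideanSpace ℝ (Fin 2)) R₀, ‖x - y‖⁻¹ ≤ κ := by
      rw [← htrans]
      apply setIntegral_mono_set hIOS
      · exact Eventually.of_forall (fun y => inv_nonneg.2 (norm_nonneg _))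
      · exact HasSubset.Subset.eventuallyLE hsub
    -- the O(1) integral term
    have hIOsum : IntegrableOn (fun y => ‖x - y‖⁻¹ + S)
        (Metric.closedBall (0 : EuclideanSpace ℝ (Fin 2)) R₀) volume := by
      apply hIO.add
      exact integrableOn_const measure_closedBall_lt_top.ne
    have hhmeas : AEStronglyMeasurable (fun y => Real.log ‖x - y‖ * f y) volume := by
      apply AEMeasurable.aestronglyMeasurable
      apply AEMeasurable.mul
      · exact (Real.measurable_log.comp
          ((continuous_const.sub continuous_id).norm.measurable)).aemeasurable
      · exact hfint.1.aemeasurable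
    have hhbound : ∀ y, ‖Real.log ‖x - y‖ * f y‖ ≤ C * BV *
        ((Metric.closedBall (0 : EuclideanSpace ℝ (Fin 2)) R₀).indicator
          (fun y => ‖x - y‖⁻¹ + S) y) := by
      intro y
      by_cases hy : ‖y‖ ≤ R₀
      · rw [indicator_of_mem (mem_closedBall_zero_iff.2 hy)]
        rw [Real.norm_eq_abs, abs_mul, abs_of_nonneg (hf0 y)]
        have h1 : |Real.log ‖x - y‖| ≤ ‖x - y‖⁻¹ + S := by
          rcases eq_or_lt_of_le (norm_nonneg (x - y)) with hr | hr
          · rw [← hr, Real.log_zero, abs_zero]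
            simp only [inv_zero, zero_add]
            exact hSpos.le
          · have hrS : ‖x - y‖ ≤ S := by
              have := norm_sub_le x y
              rw [hSdef]; nlinarith
            rw [abs_le]
            constructor
            · have h2 : Real.log ‖x - y‖⁻¹ ≤ ‖x - y‖⁻¹ - 1 :=
                Real.log_le_sub_one_of_pos (by positivity)
              rw [Real.log_inv] at h2
              have : (0:ℝ) ≤ ‖x - y‖⁻¹ := by positivity
              nlinarith
            · have h2 : Real.log ‖x - y‖ ≤ ‖x - y‖ - 1 :=
                Real.log_le_sub_one_of_pos hr
              have : (0:ℝ) ≤ ‖x - y‖⁻¹ := by positivity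
              nlinarith
        have h2 : f y ≤ C * BV := le_trans (hfC y)
          (mul_le_mul_of_nonneg_left (hBV' y) hC0)
        calc |Real.log ‖x - y‖| * f y ≤ (‖x - y‖⁻¹ + S) * (C * BV) :=
              mul_le_mul h1 h2 (hf0 y) (by positivity)
          _ = C * BV * (‖x - y‖⁻¹ + S) := by ring
      · rw [hfsupp y (not_le.1 hy), indicator_of_notMem
          (fun hmem => hy (mem_closedBall_zero_iff.1 hmem)), mul_zero, mul_zero, norm_zero]
    have hDint : Integrable (fun y => C * BV *
        ((Metric.closedBall (0 : EuclideanSpace ℝ (Fin 2)) R₀).indicator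
          (fun y => ‖x - y‖⁻¹ + S) y)) volume := by
      apply Integrable.const_mul
      exact (integrable_indicator_iff measurableSet_closedBall).2 hIOsum
    have hhint : Integrable (fun y => Real.log ‖x - y‖ * f y) volume :=
      Integrable.mono' hDint hhmeas (Eventually.of_forall hhbound)
    have hDval : ∫ y, C * BV *
        ((Metric.closedBall (0 : EuclideanSpace ℝ (Fin 2)) R₀).indicator
          (fun y => ‖x - y‖⁻¹ + S) y) ≤ Econst := by
      rw [integral_const_mul, integral_indicator measurableSet_closedBall]
      have h1 : ∫ y in Metric.closedBall (0 : EuclideanSpace ℝ (Fin 2)) R₀, (‖x - y‖⁻¹ + S) =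
          (∫ y in Metric.closedBall (0 : EuclideanSpace ℝ (Fin 2)) R₀, ‖x - y‖⁻¹) + S * volR := by
        rw [integral_add hIO (integrableOn_const measure_closedBall_lt_top.ne)]
        rw [setIntegral_const, smul_eq_mul, hvolRdef, measureReal_def]
        ring
      rw [h1, hEdef]
      have h2 : (∫ y in Metric.closedBall (0 : EuclideanSpace ℝ (Fin 2)) R₀, ‖x - y‖⁻¹)
          + S * volR ≤ κ + S * volR := by linarith [hκx]
      exact mul_le_mul_of_nonneg_left h2 (mul_nonneg hC0 hBVpos)
    have hhval : |∫ y, Real.log ‖x - y‖ * f y| ≤ Econst := by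
      have h1 := norm_integral_le_of_norm_le hDint (Eventually.of_forall hhbound)
      rw [Real.norm_eq_abs] at h1
      exact le_trans h1 hDval
    -- splitting of the logarithm
    have hxnull : ∀ᵐ (y : EuclideanSpace ℝ (Fin 2)), y ≠ x := by
      rw [ae_iff]
      simp only [ne_eq, not_not, setOf_eq_eq_singleton]
      exact measure_singleton x
    have hsplit : ∫ y, Real.log (ε * ‖x - y‖) * f y =
        Real.log ε * (∫ y, f y) + ∫ y, Real.log ‖x - y‖ * f y := by
      have hcongr : (fun y => Real.log (ε * ‖x - y‖) * f y) =ᵐ[volume]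
          (fun y => Real.log ε * f y + Real.log ‖x - y‖ * f y) := by
        filter_upwards [hxnull] with y hyx
        have hxy : ‖x - y‖ ≠ 0 := norm_ne_zero_iff.2 (sub_ne_zero.2 (Ne.symm hyx))
        rw [Real.log_mul hεpos.ne' hxy]
        ring
      rw [integral_congr_ae hcongr, integral_add (hfint.const_mul _) hhint,
        integral_const_mul]
    -- conclusion
    have hgoal : u ε (ε • x) * L⁻¹ + Λ ε =
        c * L⁻¹ * ∫ y, Real.log ‖x - y‖ * f y := by
      rw [heq2 x, hsplit, hΛ2, hLval]
      field_simp
      ring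
    rw [hgoal, abs_mul, abs_of_nonneg (by positivity : (0:ℝ) ≤ c * L⁻¹)]
    have hfinal : c * L⁻¹ * |∫ y, Real.log ‖x - y‖ * f y| ≤ c * Econst / L := by
      have h1 : c * L⁻¹ * |∫ y, Real.log ‖x - y‖ * f y| ≤ c * L⁻¹ * Econst :=
        mul_le_mul_of_nonneg_left hhval (by positivity)
      have h2 : c * L⁻¹ * Econst = c * Econst / L := by ring
      linarith [h2 ▸ h1]
    have h3 : c * Econst / L < δ := by
      rw [div_lt_iff₀ hLpos]
      have h4 := (div_lt_iff₀ hδ).1 hLbig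
      nlinarith
    linarith
  · -- degenerate case: f is not integrable
    have hΛ0 : Λ ε = 0 := by rw [hΛ2, integral_undef hfint, mul_zero]
    have hg : ¬ Integrable (fun y => Real.log (ε * ‖x - y‖) * f y) volume := by
      intro hg
      apply hfint
      set F0 : EuclideanSpace ℝ (Fin 2) → ℝ :=
        fun y => (Metric.closedBall (0 : EuclideanSpace ℝ (Fin 2)) R₀).indicator
          (fun y => (Real.log (ε * ‖x - y‖) * f y) * (Real.log (ε * ‖x - y‖))⁻¹) y with hF0def
      have hF0meas : AEStronglyMeasurable F0 volume := by
        apply AEStronglyMeasurable.indicator _ measurableSet_closedBall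
        apply AEMeasurable.aestronglyMeasurable
        apply AEMeasurable.mul hg.1.aemeasurable
        exact ((Real.measurable_log.comp
          ((continuous_const.mul (continuous_const.sub continuous_id).norm).measurable)).inv).aemeasurable
      have hxnull : ∀ᵐ (y : EuclideanSpace ℝ (Fin 2)), y ≠ x := by
        rw [ae_iff]
        simp only [ne_eq, not_not, setOf_eq_eq_singleton]
        exact measure_singleton x
      have hcongr : F0 =ᵐ[volume] f := by
        filter_upwards [hxnull] with y hyx
        by_cases hy : ‖y‖ ≤ R₀
        · rw [hF0def]
          simp only
          rw [indicator_of_mem (mem_closedBall_zero_iff.2 hy)]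
          have hm : Real.log (ε * ‖x - y‖) ≠ 0 := by
            have := hlog_le y hy hyx
            linarith
          field_simp
        · rw [hF0def]
          simp only
          rw [indicator_of_notMem (fun hmem => hy (mem_closedBall_zero_iff.1 hmem))]
          rw [hfsupp y (not_le.1 hy)]
      have hbound : ∀ᵐ y ∂volume, ‖F0 y‖ ≤ ‖Real.log (ε * ‖x - y‖) * f y‖ := by
        filter_upwards [hxnull] with y hyx
        by_cases hy : ‖y‖ ≤ R₀
        · rw [hF0def]
          simp only
          rw [indicator_of_mem (mem_closedBall_zero_iff.2 hy)]
          have hm : 1 ≤ |Real.log (ε * ‖x - y‖)| := by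
            have := hlog_le y hy hyx
            rw [abs_of_nonpos (by linarith)]
            linarith
          rw [Real.norm_eq_abs, Real.norm_eq_abs, abs_mul, abs_inv]
          have h2 : |Real.log (ε * ‖x - y‖) * f y| * |Real.log (ε * ‖x - y‖)|⁻¹ ≤
              |Real.log (ε * ‖x - y‖) * f y| * 1 := by
            apply mul_le_mul_of_nonneg_left _ (abs_nonneg _)
            rw [inv_le_one_iff₀]
            right; exact hm
          simpa using h2
        · rw [hF0def]
          simp only
          rw [indicator_of_notMem (fun hmem => hy (mem_closedBall_zero_iff.1 hmem))]
          simp only [norm_zero]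
          exact norm_nonneg _
      have hF0int : Integrable F0 volume := Integrable.mono' hg.norm hF0meas hbound
      exact hF0int.congr hcongr
    have hu0 : u ε (ε • x) = 0 := by
      rw [heq2 x, integral_undef hg, mul_zero]
    rw [hu0, hΛ0]
    simpa using hδ
end

section
/- Under the assumptions of the previous statement, Λ_ε = (τ/2π)(1 − Λ_ε) + o(1) as ε → 0, and hence lim_{ε→0} Λ_ε = τ/(2π + τ); consequently u^ε(εx)|log ε|^{−1} → −τ/(2π+τ) uniformly on compact sets. -/
open MeasureTheory Real Filter Set

/-- In the setup of the previous statement (and given the uniform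
convergence `sup_{‖x‖≤k} |u ε (εx)|log ε|⁻¹ + Λ ε| → 0`), one has
`Λ ε = (τ/2π)(1 − Λ ε) + o(1)` as `ε → 0⁺`, hence `Λ ε → τ/(2π + τ)`;
consequently `u ε (εx) |log ε|⁻¹ → −τ/(2π + τ)` uniformly on compact sets. -/
theorem stmt15
    (R₀ τ : ℝ) (hR₀ : 0 < R₀) (hτ : 0 < τ)
    (V : EuclideanSpace ℝ (Fin 2) → ℝ)
    (hVcont : Continuous V) (hVnonneg : ∀ x, 0 ≤ V x)
    (hVsupp : ∀ x, R₀ < ‖x‖ → V x = 0)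
    (hVint : ∫ x, V x = 1)
    (u : ℝ → EuclideanSpace ℝ (Fin 2) → ℝ)
    (Λ : ℝ → ℝ)
    (hΛ : ∀ ε ∈ Set.Ioo (0 : ℝ) 1,
      Λ ε = (τ / (2 * Real.pi)) * ∫ y, (u ε (ε • y) * |Real.log ε|⁻¹ + 1) * V y)
    (heq : ∀ ε ∈ Set.Ioo (0 : ℝ) 1, ∀ x,
      u ε (ε • x) = (τ / (2 * Real.pi)) *
        ∫ y, Real.log (ε * ‖x - y‖) * (u ε (ε • y) * |Real.log ε|⁻¹ + 1) * V y)
    (hlower : ∀ ε ∈ Set.Ioo (0 : ℝ) 1, ∀ x, -|Real.log ε| ≤ u ε x)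
    (hbdd : ∃ M : ℝ, ∀ ε ∈ Set.Ioo (0 : ℝ) 1, |Λ ε| ≤ M)
    (hsup : ∀ k : ℝ, 0 < k → ∀ δ : ℝ, 0 < δ →
      ∀ᶠ ε in nhdsWithin (0 : ℝ) (Set.Ioo (0 : ℝ) 1),
        ∀ x : EuclideanSpace ℝ (Fin 2), ‖x‖ ≤ k →
          |u ε (ε • x) * |Real.log ε|⁻¹ + Λ ε| < δ) :
    Filter.Tendsto (fun ε => Λ ε - (τ / (2 * Real.pi)) * (1 - Λ ε))
        (nhdsWithin (0 : ℝ) (Set.Ioo (0 : ℝ) 1)) (nhds 0) ∧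
    Filter.Tendsto Λ (nhdsWithin (0 : ℝ) (Set.Ioo (0 : ℝ) 1))
        (nhds (τ / (2 * Real.pi + τ))) ∧
    (∀ k : ℝ, 0 < k → ∀ δ : ℝ, 0 < δ →
      ∀ᶠ ε in nhdsWithin (0 : ℝ) (Set.Ioo (0 : ℝ) 1),
        ∀ x : EuclideanSpace ℝ (Fin 2), ‖x‖ ≤ k →
          |u ε (ε • x) * |Real.log ε|⁻¹ + τ / (2 * Real.pi + τ)| < δ) := by
  have hπ : (0:ℝ) < 2 * Real.pi := by positivity
  set c : ℝ := τ / (2 * Real.pi) with hc_def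
  have hc : 0 < c := div_pos hτ hπ
  -- V is integrable
  have hVcs : HasCompactSupport V := by
    apply HasCompactSupport.intro (isCompact_closedBall (0 : EuclideanSpace ℝ (Fin 2)) R₀)
    intro x hx
    apply hVsupp
    simpa [Metric.mem_closedBall, dist_zero_right, not_le] using hx
  have hVintg : Integrable V := hVcont.integrable_of_hasCompactSupport hVcs
  -- a.e. strong measurability of the main integrand
  have hGmeas : ∀ ε ∈ Set.Ioo (0:ℝ) 1,
      AEStronglyMeasurable (fun y => (u ε (ε • y) * |Real.log ε|⁻¹ + 1) * V y) volume := by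
    intro ε hε
    by_contra h
    have hu0 : ∀ z, u ε z = 0 := by
      intro z
      have hx := heq ε hε (ε⁻¹ • z)
      rw [smul_smul, mul_inv_cancel₀ (ne_of_gt hε.1), one_smul] at hx
      set x : EuclideanSpace ℝ (Fin 2) := ε⁻¹ • z with hxdef
      have hni : ¬ Integrable (fun y =>
          Real.log (ε * ‖x - y‖) * (u ε (ε • y) * |Real.log ε|⁻¹ + 1) * V y) volume := by
        intro hint
        apply h
        have hmeaslog : Measurable fun y : EuclideanSpace ℝ (Fin 2) =>
            (Real.log (ε * ‖x - y‖))⁻¹ :=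
          (Real.measurable_log.comp
            (measurable_const.mul ((continuous_const.sub continuous_id).norm.measurable))).inv
        have hnull : volume ({x} ∪ Metric.sphere x ε⁻¹ : Set (EuclideanSpace ℝ (Fin 2))) = 0 :=
          measure_union_null (measure_singleton x) (Measure.addHaar_sphere volume x ε⁻¹)
        refine (hint.aestronglyMeasurable.mul hmeaslog.aestronglyMeasurable).congr ?_
        refine Filter.eventuallyEq_of_mem
          (s := ({x} ∪ Metric.sphere x ε⁻¹ : Set (EuclideanSpace ℝ (Fin 2)))ᶜ)
          (MeasureTheory.mem_ae_iff.mpr (by rwa [compl_compl])) ?_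
        intro y hy
        simp only [Set.mem_compl_iff, Set.mem_union, Set.mem_singleton_iff,
          Metric.mem_sphere, not_or] at hy
        have hne : x - y ≠ 0 := sub_ne_zero.mpr (Ne.symm hy.1)
        have hpos : 0 < ε * ‖x - y‖ := mul_pos hε.1 (norm_pos_iff.mpr hne)
        have hone : ε * ‖x - y‖ ≠ 1 := by
          intro habs
          apply hy.2
          rw [dist_eq_norm, ← norm_sub_rev]
          exact eq_inv_of_mul_eq_one_right habs
        have hl : Real.log (ε * ‖x - y‖) ≠ 0 := by
          rw [Ne, Real.log_eq_zero]
          push_neg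
          exact ⟨ne_of_gt hpos, hone, by linarith⟩
        simp only [Pi.mul_apply]
        field_simp
      rw [integral_undef hni, mul_zero] at hx
      exact hx
    apply h
    have : (fun y => (u ε (ε • y) * |Real.log ε|⁻¹ + 1) * V y) = V := by
      funext y; rw [hu0]; ring
    rw [this]
    exact hVcont.aestronglyMeasurable
  -- Key quantitative estimate
  have hkey : ∀ δ : ℝ, 0 < δ →
      ∀ᶠ ε in nhdsWithin (0 : ℝ) (Set.Ioo (0 : ℝ) 1),
        |Λ ε - c * (1 - Λ ε)| ≤ c * δ := by
    intro δ hδ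
    filter_upwards [hsup R₀ hR₀ δ hδ, self_mem_nhdsWithin] with ε h1 h2
    set G : EuclideanSpace ℝ (Fin 2) → ℝ :=
      fun y => (u ε (ε • y) * |Real.log ε|⁻¹ + 1) * V y with hGdef
    have hGa : AEStronglyMeasurable G volume := hGmeas ε h2
    have hbound : ∀ y, ‖G y - (1 - Λ ε) * V y‖ ≤ δ * V y := by
      intro y
      have e : G y - (1 - Λ ε) * V y = (u ε (ε • y) * |Real.log ε|⁻¹ + Λ ε) * V y := by
        simp only [hGdef]; ring
      rw [e, Real.norm_eq_abs, abs_mul, abs_of_nonneg (hVnonneg y)]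
      by_cases hy : ‖y‖ ≤ R₀
      · exact mul_le_mul_of_nonneg_right (le_of_lt (h1 y hy)) (hVnonneg y)
      · rw [hVsupp y (lt_of_not_ge hy)]; simp
    have hF : Integrable (fun y => G y - (1 - Λ ε) * V y) volume := by
      apply Integrable.mono (hVintg.const_mul δ)
        (hGa.sub (hVcont.aestronglyMeasurable.const_mul _))
      filter_upwards with y
      rw [Real.norm_eq_abs (δ * V y), abs_of_nonneg (mul_nonneg hδ.le (hVnonneg y))]
      exact hbound y
    have hGint : Integrable G volume := by
      have := hF.add (hVintg.const_mul (1 - Λ ε))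
      refine this.congr (Filter.Eventually.of_forall fun y => ?_)
      simp
    have hΛeq : Λ ε - c * (1 - Λ ε) = c * ∫ y, (G y - (1 - Λ ε) * V y) := by
      rw [integral_sub hGint (hVintg.const_mul _), integral_const_mul, hVint, mul_one,
        hΛ ε h2]
      ring
    rw [hΛeq, abs_mul, abs_of_nonneg hc.le]
    apply mul_le_mul_of_nonneg_left _ hc.le
    calc |∫ y, (G y - (1 - Λ ε) * V y)| ≤ ∫ y, ‖G y - (1 - Λ ε) * V y‖ := by
          rw [← Real.norm_eq_abs]; exact norm_integral_le_integral_norm _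
      _ ≤ ∫ y, δ * V y := integral_mono hF.norm (hVintg.const_mul δ) hbound
      _ = δ := by rw [integral_const_mul, hVint, mul_one]
  -- Part 1
  have part1 : Filter.Tendsto (fun ε => Λ ε - c * (1 - Λ ε))
      (nhdsWithin (0 : ℝ) (Set.Ioo (0 : ℝ) 1)) (nhds 0) := by
    rw [Metric.tendsto_nhds]
    intro δ hδ
    filter_upwards [hkey (δ / (2 * c)) (by positivity)] with ε hε
    rw [Real.dist_eq, sub_zero]
    calc |Λ ε - c * (1 - Λ ε)| ≤ c * (δ / (2 * c)) := hε
      _ = δ / 2 := by field_simp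
      _ < δ := by linarith
  -- Part 2
  have h1c : (1 : ℝ) + c ≠ 0 := by positivity
  have part2 : Filter.Tendsto Λ (nhdsWithin (0 : ℝ) (Set.Ioo (0 : ℝ) 1))
      (nhds (τ / (2 * Real.pi + τ))) := by
    have h2 : Filter.Tendsto (fun ε => ((Λ ε - c * (1 - Λ ε)) + c) / (1 + c))
        (nhdsWithin (0 : ℝ) (Set.Ioo (0 : ℝ) 1)) (nhds ((0 + c) / (1 + c))) :=
      (part1.add_const c).div_const (1 + c)
    have e1 : (fun ε => ((Λ ε - c * (1 - Λ ε)) + c) / (1 + c)) = Λ := by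
      funext ε; field_simp; ring
    have e2 : (0 + c) / (1 + c) = τ / (2 * Real.pi + τ) := by
      have hπτ : 2 * Real.pi + τ ≠ 0 := by positivity
      rw [zero_add, hc_def]
      field_simp
    rwa [e1, e2] at h2
  refine ⟨part1, part2, ?_⟩
  -- Part 3
  intro k hk δ hδ
  have hΛclose : ∀ᶠ ε in nhdsWithin (0 : ℝ) (Set.Ioo (0 : ℝ) 1),
      |Λ ε - τ / (2 * Real.pi + τ)| < δ / 2 := by
    have := Metric.tendsto_nhds.mp part2 (δ / 2) (half_pos hδ)
    filter_upwards [this] with ε hε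
    rwa [Real.dist_eq] at hε
  filter_upwards [hsup k hk (δ / 2) (half_pos hδ), hΛclose] with ε h1 h2 x hx
  have e : u ε (ε • x) * |Real.log ε|⁻¹ + τ / (2 * Real.pi + τ) =
      (u ε (ε • x) * |Real.log ε|⁻¹ + Λ ε) - (Λ ε - τ / (2 * Real.pi + τ)) := by ring
  rw [e]
  calc |(u ε (ε • x) * |Real.log ε|⁻¹ + Λ ε) - (Λ ε - τ / (2 * Real.pi + τ))|
      ≤ |u ε (ε • x) * |Real.log ε|⁻¹ + Λ ε| + |Λ ε - τ / (2 * Real.pi + τ)| :=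
        abs_sub _ _
    _ < δ / 2 + δ / 2 := add_lt_add (h1 x hx) h2
    _ = δ := by ring
end

section
/- With u^ε as above, for all z ∈ ℝ² and all x with |x| ≥ max(2|z| + R₀ε, 2R₀ε), |∇u^ε(x+z) − ∇u^ε(x)| ≤ C|z|/|x|². -/
open MeasureTheory Real

lemma integrable_of_kernel (f : EuclideanSpace ℝ (Fin 2) → ℝ) (c : EuclideanSpace ℝ (Fin 2))
    (m M : ℝ) (hm : 0 < m)
    (hlo : ∀ y, f y ≠ 0 → m ≤ ‖c - y‖) (hhi : ∀ y, f y ≠ 0 → ‖c - y‖ ≤ M)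
    (hg : Integrable (fun y => (f y / ‖c - y‖ ^ 2) • (c - y))) : Integrable f := by
  set g : EuclideanSpace ℝ (Fin 2) → EuclideanSpace ℝ (Fin 2) :=
    fun y => (f y / ‖c - y‖ ^ 2) • (c - y) with hgdef
  have hfeq : ∀ y, f y = inner ℝ (g y) (c - y) := by
    intro y
    by_cases hfy : f y = 0
    · simp [hgdef, hfy]
    · have hne : ‖c - y‖ ≠ 0 := by
        exact ne_of_gt (lt_of_lt_of_le hm (hlo y hfy))
      rw [hgdef]
      simp only [real_inner_smul_left, real_inner_self_eq_norm_sq]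
      field_simp
  have hmeas : AEStronglyMeasurable f volume := by
    have : AEStronglyMeasurable (fun y => (inner ℝ (g y) (c - y) : ℝ)) volume :=
      AEStronglyMeasurable.inner hg.aestronglyMeasurable
        ((continuous_const.sub continuous_id).aestronglyMeasurable)
    exact this.congr (ae_of_all _ fun y => (hfeq y).symm)
  refine (hg.norm.const_mul M).mono' hmeas (ae_of_all _ fun y => ?_)
  by_cases hfy : f y = 0
  · simp only [hfy, norm_zero]
    have : g y = 0 := by simp [hgdef, hfy]
    simp [this]
  · have h1 : ‖g y‖ = |f y| / ‖c - y‖ := by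
      have hne : ‖c - y‖ ≠ 0 := ne_of_gt (lt_of_lt_of_le hm (hlo y hfy))
      rw [hgdef]
      simp only [norm_smul, Real.norm_eq_abs, abs_div, abs_pow, abs_norm]
      field_simp
    have hne : (0:ℝ) < ‖c - y‖ := lt_of_lt_of_le hm (hlo y hfy)
    have := hhi y hfy
    rw [Real.norm_eq_abs]
    calc |f y| = (|f y| / ‖c - y‖) * ‖c - y‖ := by field_simp
    _ ≤ ‖g y‖ * M := by rw [h1]; apply mul_le_mul_of_nonneg_left this (by positivity)
    _ = M * ‖g y‖ := by ring

lemma kernel_integrable (f : EuclideanSpace ℝ (Fin 2) → ℝ) (c : EuclideanSpace ℝ (Fin 2))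
    (m : ℝ) (hm : 0 < m) (hlo : ∀ y, f y ≠ 0 → m ≤ ‖c - y‖) (hf : Integrable f) :
    Integrable (fun y => (f y / ‖c - y‖ ^ 2) • (c - y)) := by
  have hmeas : AEStronglyMeasurable (fun y => (f y / ‖c - y‖ ^ 2) • (c - y)) volume := by
    refine AEStronglyMeasurable.smul (f := fun y => f y / ‖c - y‖ ^ 2) (g := fun y => c - y) ?_ ?_
    · exact (hf.aemeasurable.div
        (((continuous_const.sub continuous_id).norm.pow 2).measurable.aemeasurable)).aestronglyMeasurable
    · exact (continuous_const.sub continuous_id).aestronglyMeasurable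
  refine ((hf.norm.const_mul m⁻¹)).mono' hmeas (ae_of_all _ fun y => ?_)
  by_cases hfy : f y = 0
  · simp [hfy]
  · have hpos : (0:ℝ) < ‖c - y‖ := lt_of_lt_of_le hm (hlo y hfy)
    have h1 : ‖(f y / ‖c - y‖ ^ 2) • (c - y)‖ = |f y| / ‖c - y‖ := by
      simp only [norm_smul, Real.norm_eq_abs, abs_div, abs_pow, abs_norm]
      field_simp
    rw [h1]
    have : |f y| / ‖c - y‖ ≤ |f y| / m := by
      apply div_le_div_of_nonneg_left (abs_nonneg _) hm (hlo y hfy)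
    calc |f y| / ‖c - y‖ ≤ |f y| / m := this
    _ = m⁻¹ * ‖f y‖ := by rw [Real.norm_eq_abs]; ring

lemma inv_kernel_sub {F : Type*} [NormedAddCommGroup F] [InnerProductSpace ℝ F]
    (a b : F) (ha : a ≠ 0) (hb : b ≠ 0) :
    ‖(‖b‖ ^ 2)⁻¹ • b - (‖a‖ ^ 2)⁻¹ • a‖ = ‖b - a‖ / (‖a‖ * ‖b‖) := by
  have h := EuclideanGeometry.dist_inversion_inversion (c := (0 : F)) hb ha 1
  simp only [EuclideanGeometry.inversion, dist_eq_norm, sub_zero, vsub_eq_sub, vadd_eq_add,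
    add_zero, one_pow, one_div, div_pow, one_mul, inv_pow] at h
  rw [h, mul_comm ‖b‖ ‖a‖, div_eq_inv_mul]

theorem stmt18_main
    (R₀ τ ε : ℝ) (hR₀ : 0 < R₀) (hτ : 0 < τ) (hε : ε ∈ Set.Ioo (0 : ℝ) 1)
    (V : EuclideanSpace ℝ (Fin 2) → ℝ)
    (hVsupp : ∀ x, R₀ < ‖x‖ → V x = 0)
    (u : EuclideanSpace ℝ (Fin 2) → ℝ)
    (hgrad : ∀ x, gradient u x = (τ / (2 * Real.pi)) • ∫ y,
      (((ε ^ 2 * |Real.log ε|)⁻¹ * V (ε⁻¹ • y) * u y + ε⁻¹ ^ 2 * V (ε⁻¹ • y))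
        / ‖x - y‖ ^ 2) • (x - y)) :
    ∃ C : ℝ, ∀ z x : EuclideanSpace ℝ (Fin 2),
      max (2 * ‖z‖ + R₀ * ε) (2 * R₀ * ε) ≤ ‖x‖ →
      ‖gradient u (x + z) - gradient u x‖ ≤ C * ‖z‖ / ‖x‖ ^ 2 := by
  have hε0 : 0 < ε := hε.1
  set f : EuclideanSpace ℝ (Fin 2) → ℝ := fun y =>
    (ε ^ 2 * |Real.log ε|)⁻¹ * V (ε⁻¹ • y) * u y + ε⁻¹ ^ 2 * V (ε⁻¹ • y) with hfdef
  -- support of f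
  have hsupp : ∀ y : EuclideanSpace ℝ (Fin 2), f y ≠ 0 → ‖y‖ ≤ R₀ * ε := by
    intro y hy
    by_contra hcon
    push_neg at hcon
    have hV : V (ε⁻¹ • y) = 0 := by
      apply hVsupp
      rw [norm_smul, Real.norm_eq_abs, abs_of_pos (inv_pos.mpr hε0)]
      rw [lt_inv_mul_iff₀ hε0]  -- maybe wrong name
      linarith [hcon]
    apply hy
    simp [hfdef, hV]
  refine ⟨|τ / (2 * Real.pi)| * 8 * ∫ y, |f y|, ?_⟩
  intro z x hx
  have hIabs : (0:ℝ) ≤ ∫ y, |f y| := integral_nonneg fun y => abs_nonneg _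
  have hx2 : 2 * (R₀ * ε) ≤ ‖x‖ := by
    have := le_trans (le_max_right _ _) hx; linarith [this]
  have hxz : 2 * ‖z‖ + R₀ * ε ≤ ‖x‖ := le_trans (le_max_left _ _) hx
  have hR0ε : 0 < R₀ * ε := mul_pos hR₀ hε0
  have hxpos : 0 < ‖x‖ := by linarith
  -- distance lower bounds
  have hfar2 : ∀ y : EuclideanSpace ℝ (Fin 2), f y ≠ 0 → ‖x‖ / 2 ≤ ‖x - y‖ := by
    intro y hy
    have h1 := hsupp y hy
    have h2 : ‖x‖ - ‖y‖ ≤ ‖x - y‖ := norm_sub_norm_le x y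
    linarith
  have hfar1 : ∀ y : EuclideanSpace ℝ (Fin 2), f y ≠ 0 → ‖x‖ / 4 ≤ ‖x + z - y‖ := by
    intro y hy
    have h1 := hsupp y hy
    have h2 : ‖x + z‖ - ‖y‖ ≤ ‖x + z - y‖ := norm_sub_norm_le _ y
    have h3 : ‖x‖ - ‖z‖ ≤ ‖x + z‖ := by
      have := norm_add_le (x + z) (-z)
      simp at this
      linarith [this, norm_neg z]
    linarith
  set g₁ : EuclideanSpace ℝ (Fin 2) → EuclideanSpace ℝ (Fin 2) :=
    fun y => (f y / ‖x + z - y‖ ^ 2) • (x + z - y) with hg1def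
  set g₂ : EuclideanSpace ℝ (Fin 2) → EuclideanSpace ℝ (Fin 2) :=
    fun y => (f y / ‖x - y‖ ^ 2) • (x - y) with hg2def
  have hgr1 : gradient u (x + z) = (τ / (2 * Real.pi)) • ∫ y, g₁ y := hgrad (x + z)
  have hgr2 : gradient u x = (τ / (2 * Real.pi)) • ∫ y, g₂ y := hgrad x
  by_cases hfint : Integrable f
  · -- integrable case
    have h1 : Integrable g₁ :=
      kernel_integrable f (x + z) (‖x‖ / 4) (by linarith) hfar1 hfint
    have h2 : Integrable g₂ :=
      kernel_integrable f x (‖x‖ / 2) (by linarith) hfar2 hfint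
    have key : ∀ y, ‖g₁ y - g₂ y‖ ≤ 8 * ‖z‖ / ‖x‖ ^ 2 * |f y| := by
      intro y
      by_cases hfy : f y = 0
      · simp [hg1def, hg2def, hfy]
      · have ha : (0:ℝ) < ‖x - y‖ := lt_of_lt_of_le (by linarith) (hfar2 y hfy)
        have hb : (0:ℝ) < ‖x + z - y‖ := lt_of_lt_of_le (by linarith) (hfar1 y hfy)
        have hrw : g₁ y - g₂ y = f y • ((‖x + z - y‖ ^ 2)⁻¹ • (x + z - y)
            - (‖x - y‖ ^ 2)⁻¹ • (x - y)) := by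
          rw [hg1def, hg2def]
          simp only [div_eq_mul_inv, smul_sub, mul_smul]
        rw [hrw, norm_smul, Real.norm_eq_abs,
          inv_kernel_sub (x - y) (x + z - y) (norm_pos_iff.mp ha) (norm_pos_iff.mp hb)]
        have hz : x + z - y - (x - y) = z := by abel
        rw [hz]
        have hab : ‖x‖ / 2 * (‖x‖ / 4) ≤ ‖x - y‖ * ‖x + z - y‖ :=
          mul_le_mul (hfar2 y hfy) (hfar1 y hfy) (by linarith) (norm_nonneg _)
        have h8 : ‖z‖ / (‖x - y‖ * ‖x + z - y‖) ≤ 8 * ‖z‖ / ‖x‖ ^ 2 := by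
          rw [div_le_div_iff₀ (by positivity) (by positivity)]
          nlinarith [norm_nonneg z, hab, mul_pos ha hb]
        calc |f y| * (‖z‖ / (‖x - y‖ * ‖x + z - y‖))
            ≤ |f y| * (8 * ‖z‖ / ‖x‖ ^ 2) :=
              mul_le_mul_of_nonneg_left h8 (abs_nonneg _)
          _ = 8 * ‖z‖ / ‖x‖ ^ 2 * |f y| := by ring
    rw [hgr1, hgr2, ← smul_sub, ← integral_sub h1 h2]
    rw [norm_smul, Real.norm_eq_abs]
    have hbound : ‖∫ y, (g₁ y - g₂ y)‖ ≤ 8 * ‖z‖ / ‖x‖ ^ 2 * ∫ y, |f y| := by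
      calc ‖∫ y, (g₁ y - g₂ y)‖ ≤ ∫ y, ‖g₁ y - g₂ y‖ := norm_integral_le_integral_norm _
        _ ≤ ∫ y, 8 * ‖z‖ / ‖x‖ ^ 2 * |f y| := by
            apply integral_mono ((h1.sub h2).norm) (hfint.abs.const_mul _) key
        _ = 8 * ‖z‖ / ‖x‖ ^ 2 * ∫ y, |f y| := integral_const_mul _ _
    calc |τ / (2 * Real.pi)| * ‖∫ y, (g₁ y - g₂ y)‖
        ≤ |τ / (2 * Real.pi)| * (8 * ‖z‖ / ‖x‖ ^ 2 * ∫ y, |f y|) :=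
          mul_le_mul_of_nonneg_left hbound (abs_nonneg _)
      _ = |τ / (2 * Real.pi)| * 8 * (∫ y, |f y|) * ‖z‖ / ‖x‖ ^ 2 := by ring
  · -- non-integrable case: both integrals vanish
    have hn1 : ¬ Integrable g₁ := by
      intro hcon
      exact hfint (integrable_of_kernel f (x + z) (‖x‖ / 4) (‖x + z‖ + R₀ * ε) (by linarith)
        hfar1 (fun y hy => le_trans (norm_sub_le _ _)
          (by have := hsupp y hy; linarith)) hcon)
    have hn2 : ¬ Integrable g₂ := by
      intro hcon
      exact hfint (integrable_of_kernel f x (‖x‖ / 2) (‖x‖ + R₀ * ε) (by linarith)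
        hfar2 (fun y hy => le_trans (norm_sub_le _ _)
          (by have := hsupp y hy; linarith)) hcon)
    rw [hgr1, hgr2, integral_undef hn1, integral_undef hn2]
    simp only [smul_zero, sub_zero, norm_zero]
    positivity

/-- With `u = u^ε` as above, whose gradient is the vector potential
`∇u(x) = ∫ (x−y)/‖x−y‖² μ^ε(dy)` of the measure with density
`(τ/2π)(V_ε u + V^ε)` supported in `{‖y‖ ≤ R₀ ε}` and of bounded total mass,
there is a constant `C` such that for all `z ∈ ℝ²` and all `x` with
`‖x‖ ≥ max(2‖z‖ + R₀ε, 2R₀ε)`, `‖∇u(x+z) − ∇u(x)‖ ≤ C ‖z‖ / ‖x‖²`. -/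
theorem stmt18
    (R₀ τ ε : ℝ) (hR₀ : 0 < R₀) (hτ : 0 < τ) (hε : ε ∈ Set.Ioo (0 : ℝ) 1)
    (V : EuclideanSpace ℝ (Fin 2) → ℝ)
    (hVcont : Continuous V) (hVnonneg : ∀ x, 0 ≤ V x)
    (hVsupp : ∀ x, R₀ < ‖x‖ → V x = 0)
    (hVint : ∫ x, V x = 1)
    (u : EuclideanSpace ℝ (Fin 2) → ℝ)
    (hu : ∀ x, u x = (τ / (2 * Real.pi)) * ∫ y, Real.log ‖x - y‖ *
      ((ε ^ 2 * |Real.log ε|)⁻¹ * V (ε⁻¹ • y) * u y + ε⁻¹ ^ 2 * V (ε⁻¹ • y)))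
    (hmass : (τ / (2 * Real.pi)) * (∫ y,
        ((ε ^ 2 * |Real.log ε|)⁻¹ * V (ε⁻¹ • y) * u y + ε⁻¹ ^ 2 * V (ε⁻¹ • y))) ≤ 2)
    (hgrad : ∀ x, gradient u x = (τ / (2 * Real.pi)) • ∫ y,
      (((ε ^ 2 * |Real.log ε|)⁻¹ * V (ε⁻¹ • y) * u y + ε⁻¹ ^ 2 * V (ε⁻¹ • y))
        / ‖x - y‖ ^ 2) • (x - y)) :
    ∃ C : ℝ, ∀ z x : EuclideanSpace ℝ (Fin 2),
      max (2 * ‖z‖ + R₀ * ε) (2 * R₀ * ε) ≤ ‖x‖ →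
      ‖gradient u (x + z) - gradient u x‖ ≤ C * ‖z‖ / ‖x‖ ^ 2 := by
  exact stmt18_main R₀ τ ε hR₀ hτ hε V hVsupp u hgrad
end
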